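/- arXiv:1604.02097 — 3 statements merged into one kernel-verified Lean document; each statement's English description precedes it below -/
import Mathlib

section
/- Fix β ≥ β' ≥ 0 and an initial state x₀ = (x₀₁, x₀₂) with positive integer entries. Then for every n ≥ 1, the time of the n-th tie satisfies T_n(β,1,x₀) ⪰ T_n(β',1,x₀), while the duration (time of the last tie) satisfies T(β,1,x₀) ⪯ T(β',1,x₀); i.e., for every t, P[T_n(β,1,x₀) ≥ t] ≥ P[T_n(β',1,x₀) ≥ t] and P[T(β,1,x₀) ≥ t] ≤ P[T(β',1,x₀) ≥ t]. -/
open MeasureTheory Filter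

noncomputable section

/-- Transition probability of the nonlinear Pólya urn with feedback strength `β` and
fitness ratio `r`: from `(x₁,x₂)` move to `(x₁+1,x₂)` with probability
`r·x₁^β/(r·x₁^β + x₂^β)`, to `(x₁,x₂+1)` with probability `x₂^β/(r·x₁^β + x₂^β)`,
and nowhere else. -/
def urnStep (β r : ℝ) (x y : ℕ × ℕ) : ℝ :=
  if y = (x.1 + 1, x.2) then r * (x.1 : ℝ) ^ β / (r * (x.1 : ℝ) ^ β + (x.2 : ℝ) ^ β)
  else if y = (x.1, x.2 + 1) then (x.2 : ℝ) ^ β / (r * (x.1 : ℝ) ^ β + (x.2 : ℝ) ^ β)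
  else 0

/-- `μ` is the law (on trajectories `ℕ → ℕ × ℕ`) of a `(β,r,x₀)`-urn process:
a probability measure under which each finite initial trajectory starting at `x₀`
has probability equal to the product of the one-step urn transition probabilities. -/
def IsUrnProcess (μ : Measure (ℕ → ℕ × ℕ)) (β r : ℝ) (x₀ : ℕ × ℕ) : Prop :=
  IsProbabilityMeasure μ ∧
  ∀ (n : ℕ) (path : ℕ → ℕ × ℕ), path 0 = x₀ →
    (μ {ω | ∀ t ≤ n, ω t = path t}).toReal
      = ∏ t ∈ Finset.range n, urnStep β r (path t) (path (t + 1))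

/-- `N_t`: the number of ties up to (and including) time `t`. -/
def numTiesUpTo (ω : ℕ → ℕ × ℕ) (t : ℕ) : ℕ :=
  ((Finset.range (t + 1)).filter (fun j => (ω j).1 = (ω j).2)).card

/-- The intensity `N`: the total number of ties (possibly `∞`). -/
def intensity (ω : ℕ → ℕ × ℕ) : ℕ∞ :=
  {t : ℕ | (ω t).1 = (ω t).2}.encard

/-- `T_n` (for `n ≥ 1`): the time of the `n`-th tie, i.e. the (unique, if it exists) time `s`
at which a tie occurs and the number of ties up to `s` equals `n`; `⊤` if there is no such time. -/
def nthTieTime (n : ℕ) (ω : ℕ → ℕ × ℕ) : ℕ∞ :=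
  sInf {t : ℕ∞ | ∃ s : ℕ, t = (s : ℕ∞) ∧ (ω s).1 = (ω s).2 ∧ numTiesUpTo ω s = n}

/-- The event `{T ≥ t}` where `T` is the duration (time of the last tie, with the convention
`T = -1` if there is no tie): for `t : ℕ` this event is exactly `{∃ s ≥ t, a tie occurs at s}`. -/
def durationTail (t : ℕ) : Set (ℕ → ℕ × ℕ) :=
  {ω | ∃ s, t ≤ s ∧ (ω s).1 = (ω s).2}



-- ===== auxiliary development =====

/-- absolute difference -/
def dd (y : ℕ × ℕ) : ℕ := (y.1 - y.2) + (y.2 - y.1)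

def stepFn (x : ℕ × ℕ) (b : Bool) : ℕ × ℕ := if b then (x.1 + 1, x.2) else (x.1, x.2 + 1)

def prob (β : ℝ) (x : ℕ × ℕ) (b : Bool) : ℝ :=
  (if b then (x.1 : ℝ) ^ β else (x.2 : ℝ) ^ β) / ((x.1 : ℝ) ^ β + (x.2 : ℝ) ^ β)

def S (β : ℝ) : ℕ → ℕ × ℕ → (List ℕ → ℝ) → ℝ
  | 0, _, f => f []
  | m + 1, x, f =>
      prob β x true * S β m (stepFn x true) (fun l => f (dd (stepFn x true) :: l)) +
      prob β x false * S β m (stepFn x false) (fun l => f (dd (stepFn x false) :: l))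

def LE' (l l' : List ℕ) : Prop := List.Forall₂ (· ≤ ·) l l'

def Dom (f g : List ℕ → ℝ) : Prop := ∀ l l', LE' l l' → f l ≤ g l'

lemma rpow_pos' {a : ℕ} (ha : 1 ≤ a) (β : ℝ) : 0 < (a : ℝ) ^ β :=
  Real.rpow_pos_of_pos (by exact_mod_cast ha) β

lemma denom_pos {x : ℕ × ℕ} (h1 : 1 ≤ x.1) (h2 : 1 ≤ x.2) (β : ℝ) :
    0 < (x.1 : ℝ) ^ β + (x.2 : ℝ) ^ β := by
  have := rpow_pos' h1 β; have := rpow_pos' h2 β; linarith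

lemma prob_nonneg {β : ℝ} {x : ℕ × ℕ} (h1 : 1 ≤ x.1) (h2 : 1 ≤ x.2) (b : Bool) :
    0 ≤ prob β x b := by
  have := denom_pos h1 h2 β
  cases b <;> · simp only [prob]
                positivity

lemma prob_add {β : ℝ} {x : ℕ × ℕ} (h1 : 1 ≤ x.1) (h2 : 1 ≤ x.2) :
    prob β x true + prob β x false = 1 := by
  have h := denom_pos h1 h2 β
  simp only [prob, if_true, if_false]
  field_simp
  simp

lemma prob_le_one {β : ℝ} {x : ℕ × ℕ} (h1 : 1 ≤ x.1) (h2 : 1 ≤ x.2) (b : Bool) :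
    prob β x b ≤ 1 := by
  have h := prob_add (β := β) h1 h2
  have h1' := prob_nonneg (β := β) h1 h2 true
  have h2' := prob_nonneg (β := β) h1 h2 false
  cases b <;> linarith

/-- symmetry of S under swapping the two coordinates -/
lemma S_swap (β : ℝ) : ∀ m (a b : ℕ) (f : List ℕ → ℝ),
    S β m (a, b) f = S β m (b, a) f := by
  intro m
  induction m with
  | zero => intro a b f; rfl
  | succ m ih =>
    intro a b f
    show prob β (a,b) true * _ + prob β (a,b) false * _
       = prob β (b,a) true * _ + prob β (b,a) false * _
    have e1 : prob β (a,b) true = prob β (b,a) false := by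
      simp [prob, add_comm]
    have e2 : prob β (a,b) false = prob β (b,a) true := by
      simp [prob, add_comm]
    have d1 : dd (stepFn (a,b) true) = dd (stepFn (b,a) false) := by
      simp [dd, stepFn]; omega
    have d2 : dd (stepFn (a,b) false) = dd (stepFn (b,a) true) := by
      simp [dd, stepFn]; omega
    rw [e1, e2, d1, d2]
    have s1 : S β m (stepFn (a,b) true) (fun l => f (dd (stepFn (b,a) false) :: l))
        = S β m (stepFn (b,a) false) (fun l => f (dd (stepFn (b,a) false) :: l)) := by
      simp only [stepFn, if_true, if_false]; exact ih _ _ _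
    have s2 : S β m (stepFn (a,b) false) (fun l => f (dd (stepFn (b,a) true) :: l))
        = S β m (stepFn (b,a) true) (fun l => f (dd (stepFn (b,a) true) :: l)) := by
      simp only [stepFn, if_true, if_false]; exact ih _ _ _
    rw [s1, s2]; ring


lemma stepFn_one {x : ℕ × ℕ} (h1 : 1 ≤ x.1) (h2 : 1 ≤ x.2) (b : Bool) :
    1 ≤ (stepFn x b).1 ∧ 1 ≤ (stepFn x b).2 := by
  cases b <;> simp [stepFn] <;> omega


lemma rpow_nat_mono {a a' : ℕ} {β : ℝ} (hβ : 0 ≤ β) (h : a ≤ a') :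
    (a : ℝ) ^ β ≤ (a' : ℝ) ^ β :=
  Real.rpow_le_rpow (by positivity) (by exact_mod_cast h) hβ

/-- monotonicity of the up-probability in the state (for `β ≥ 0`). -/
lemma prob_mono_d {β : ℝ} (hβ : 0 ≤ β) {a b a' b' : ℕ} (hb' : 1 ≤ b') (hbb : b' ≤ b)
    (hba : b ≤ a) (haa : a ≤ a') :
    prob β (a, b) true ≤ prob β (a', b') true := by
  have hb : 1 ≤ b := hb'.trans hbb
  have ha : 1 ≤ a := hb.trans hba
  have ha' : 1 ≤ a' := ha.trans haa
  have hd : (0:ℝ) < (a:ℝ)^β + (b:ℝ)^β := denom_pos (x := (a,b)) ha hb β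
  have hd' : (0:ℝ) < (a':ℝ)^β + (b':ℝ)^β := denom_pos (x := (a',b')) ha' hb' β
  simp only [prob, if_true]
  rw [div_le_div_iff₀ hd hd']
  have h1 : (a:ℝ)^β * (b':ℝ)^β ≤ (a':ℝ)^β * (b:ℝ)^β := by
    have e1 : (a:ℝ)^β ≤ (a':ℝ)^β := rpow_nat_mono hβ haa
    have e2 : (b':ℝ)^β ≤ (b:ℝ)^β := rpow_nat_mono hβ hbb
    have p1 : (0:ℝ) < (a:ℝ)^β := rpow_pos' ha β
    have p2 : (0:ℝ) < (b':ℝ)^β := rpow_pos' hb' β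
    nlinarith
  nlinarith

/-- Key monotonicity: `S` is monotone in the starting "gap" for dominated pairs. -/
theorem S_mono (β : ℝ) (hβ : 0 ≤ β) : ∀ m (x x' : ℕ × ℕ) (f g : List ℕ → ℝ),
    1 ≤ x.1 → 1 ≤ x.2 → 1 ≤ x'.1 → 1 ≤ x'.2 → x.1 + x.2 = x'.1 + x'.2 → dd x ≤ dd x' →
    Dom f g → Dom g g → S β m x f ≤ S β m x' g := by
  intro m
  induction m with
  | zero =>
    intro x x' f g _ _ _ _ _ _ hfg _
    exact hfg [] [] List.Forall₂.nil
  | succ m ih =>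
    have core : ∀ (a b a' b' : ℕ) (f g : List ℕ → ℝ), 1 ≤ b → b ≤ a → 1 ≤ b' → b' ≤ a' →
        a + b = a' + b' → a - b ≤ a' - b' → Dom f g → Dom g g →
        S β (m+1) (a, b) f ≤ S β (m+1) (a', b') g := by
      intro a b a' b' f g hb hba hb' hba' hsum hdd hfg hgg
      have ha : 1 ≤ a := hb.trans hba
      have ha' : 1 ≤ a' := hb'.trans hba'
      have haa : a ≤ a' := by omega
      simp only [S, stepFn, reduceIte, Bool.false_eq_true, if_false]
      by_cases hca : a = a'
      · -- same states
        have hcb : b = b' := by omega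
        subst hca; subst hcb
        have h1 : S β m (a+1, b) (fun l => f (dd (a+1, b) :: l))
            ≤ S β m (a+1, b) (fun l => g (dd (a+1, b) :: l)) := by
          apply ih (a+1, b) (a+1, b) _ _ (by simpa) (by simpa) (by simpa) (by simpa) rfl le_rfl
          · exact fun l l' h => hfg _ _ (List.Forall₂.cons le_rfl h)
          · exact fun l l' h => hgg _ _ (List.Forall₂.cons le_rfl h)
        have h2 : S β m (a, b+1) (fun l => f (dd (a, b+1) :: l))
            ≤ S β m (a, b+1) (fun l => g (dd (a, b+1) :: l)) := by
          apply ih (a, b+1) (a, b+1) _ _ (by simpa) (by simpa) (by simpa) (by simpa) rfl le_rfl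
          · exact fun l l' h => hfg _ _ (List.Forall₂.cons le_rfl h)
          · exact fun l l' h => hgg _ _ (List.Forall₂.cons le_rfl h)
        have p1 := prob_nonneg (β := β) (x := (a,b)) ha hb true
        have p2 := prob_nonneg (β := β) (x := (a,b)) ha hb false
        exact add_le_add (mul_le_mul_of_nonneg_left h1 p1) (mul_le_mul_of_nonneg_left h2 p2)
      · -- strict domination
        have haa' : a < a' := lt_of_le_of_ne haa hca
        have hd2 : a - b + 2 ≤ a' - b' := by omega
        have hbb' : b' < b := by omega
        set A := S β m (a+1, b) (fun l => f (dd (a+1, b) :: l)) with hA_def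
        set B := S β m (a, b+1) (fun l => f (dd (a, b+1) :: l)) with hB_def
        set A' := S β m (a'+1, b') (fun l => g (dd (a'+1, b') :: l)) with hA'_def
        set B' := S β m (a', b'+1) (fun l => g (dd (a', b'+1) :: l)) with hB'_def
        have hA : A ≤ A' := by
          apply ih (a+1, b) (a'+1, b') _ _ (by simpa) (by simpa) (by simpa) (by simpa)
            (by simpa using (by omega : a + 1 + b = a' + 1 + b'))
            (by simp only [dd]; omega)
          · intro l l' h
            exact hfg _ _ (List.Forall₂.cons (by simp only [dd]; omega) h)
          · exact fun l l' h => hgg _ _ (List.Forall₂.cons le_rfl h)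
        have hB : B ≤ B' := by
          apply ih (a, b+1) (a', b'+1) _ _ (by simpa) (by simpa) (by simpa) (by simpa)
            (by simpa using (by omega : a + (b+1) = a' + (b'+1)))
            (by simp only [dd]; omega)
          · intro l l' h
            exact hfg _ _ (List.Forall₂.cons (by simp only [dd]; omega) h)
          · exact fun l l' h => hgg _ _ (List.Forall₂.cons le_rfl h)
        have hBA' : B' ≤ A' := by
          apply ih (a', b'+1) (a'+1, b') _ _ (by simpa) (by simpa) (by simpa) (by simpa)
            (by omega) (by simp only [dd]; omega)
          · intro l l' h
            exact hgg _ _ (List.Forall₂.cons (by simp only [dd]; omega) h)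
          · exact fun l l' h => hgg _ _ (List.Forall₂.cons le_rfl h)
        have hpp : prob β (a,b) true ≤ prob β (a',b') true :=
          prob_mono_d hβ hb' (by omega) hba haa
        have hq : prob β (a,b) false = 1 - prob β (a,b) true := by
          have := prob_add (β := β) (x := (a,b)) ha hb; linarith
        have hq' : prob β (a',b') false = 1 - prob β (a',b') true := by
          have := prob_add (β := β) (x := (a',b')) ha' hb'; linarith
        have hp0 := prob_nonneg (β := β) (x := (a,b)) ha hb true
        have hp1 := prob_le_one (β := β) (x := (a,b)) ha hb true
        have hp0' := prob_nonneg (β := β) (x := (a',b')) ha' hb' true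
        have hp1' := prob_le_one (β := β) (x := (a',b')) ha' hb' true
        rw [hq, hq']
        nlinarith [mul_le_mul_of_nonneg_left hA hp0,
          mul_le_mul_of_nonneg_left hB (by linarith : (0:ℝ) ≤ 1 - prob β (a,b) true)]
    intro x x' f g h1 h2 h1' h2' hsum hdd hfg hgg
    obtain ⟨a, b⟩ := x
    obtain ⟨a', b'⟩ := x'
    simp only at h1 h2 h1' h2' hsum
    have hdd' : (a - b) + (b - a) ≤ (a' - b') + (b' - a') := hdd
    rcases le_total b a with hn | hn <;> rcases le_total b' a' with hn' | hn'
    · exact core a b a' b' f g h2 hn h2' hn' hsum (by omega) hfg hgg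
    · rw [S_swap β (m+1) a' b']
      exact core a b b' a' f g h2 hn h1' hn' (by omega) (by omega) hfg hgg
    · rw [S_swap β (m+1) a b]
      exact core b a a' b' f g h1 hn h2' hn' (by omega) (by omega) hfg hgg
    · rw [S_swap β (m+1) a b, S_swap β (m+1) a' b']
      exact core b a b' a' f g h1 hn h1' hn' (by omega) (by omega) hfg hgg

lemma prob_mono_beta {β β' : ℝ} (hβ' : 0 ≤ β') (hββ' : β' ≤ β) {a b : ℕ}
    (hb : 1 ≤ b) (hba : b ≤ a) : prob β' (a, b) true ≤ prob β (a, b) true := by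
  have ha : 1 ≤ a := hb.trans hba
  have hd : (0:ℝ) < (a:ℝ)^β' + (b:ℝ)^β' := denom_pos (x := (a,b)) ha hb β'
  have hd' : (0:ℝ) < (a:ℝ)^β + (b:ℝ)^β := denom_pos (x := (a,b)) ha hb β
  simp only [prob, if_true]
  rw [div_le_div_iff₀ hd hd']
  have key : (a:ℝ)^β' * (b:ℝ)^β ≤ (a:ℝ)^β * (b:ℝ)^β' := by
    have ha0 : (0:ℝ) < (a:ℝ) := by exact_mod_cast ha
    have hb0 : (0:ℝ) < (b:ℝ) := by exact_mod_cast hb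
    have ea : (a:ℝ)^β = (a:ℝ)^β' * (a:ℝ)^(β - β') := by
      rw [← Real.rpow_add ha0]; ring_nf
    have eb : (b:ℝ)^β = (b:ℝ)^β' * (b:ℝ)^(β - β') := by
      rw [← Real.rpow_add hb0]; ring_nf
    rw [ea, eb]
    have h1 : (b:ℝ)^(β - β') ≤ (a:ℝ)^(β - β') := rpow_nat_mono (by linarith) hba
    have p1 : (0:ℝ) < (a:ℝ)^β' := rpow_pos' ha β'
    have p2 : (0:ℝ) < (b:ℝ)^β' := rpow_pos' hb β'
    nlinarith [mul_le_mul_of_nonneg_left h1 (mul_pos p1 p2).le]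
  calc (a:ℝ)^β' * ((a:ℝ)^β + (b:ℝ)^β) = (a:ℝ)^β * (a:ℝ)^β' + (a:ℝ)^β' * (b:ℝ)^β := by ring
    _ ≤ (a:ℝ)^β * (a:ℝ)^β' + (a:ℝ)^β * (b:ℝ)^β' := by linarith
    _ = (a:ℝ)^β * ((a:ℝ)^β' + (b:ℝ)^β') := by ring

theorem S_mono_beta {β β' : ℝ} (hβ' : 0 ≤ β') (hββ' : β' ≤ β) :
    ∀ m (x : ℕ × ℕ) (f : List ℕ → ℝ), 1 ≤ x.1 → 1 ≤ x.2 → Dom f f →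
    S β' m x f ≤ S β m x f := by
  have hβ : 0 ≤ β := hβ'.trans hββ'
  intro m
  induction m with
  | zero => intro x f _ _ _; exact le_rfl
  | succ m ih =>
    have core : ∀ (a b : ℕ) (f : List ℕ → ℝ), 1 ≤ b → b ≤ a → Dom f f →
        S β' (m+1) (a, b) f ≤ S β (m+1) (a, b) f := by
      intro a b f hb hba hff
      have ha : 1 ≤ a := hb.trans hba
      simp only [S, stepFn, reduceIte, Bool.false_eq_true, if_false]
      set A1 := S β' m (a+1, b) (fun l => f (dd (a+1, b) :: l)) with hA1
      set B1 := S β' m (a, b+1) (fun l => f (dd (a, b+1) :: l)) with hB1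
      set A2 := S β m (a+1, b) (fun l => f (dd (a+1, b) :: l)) with hA2
      set B2 := S β m (a, b+1) (fun l => f (dd (a, b+1) :: l)) with hB2
      have domc : ∀ c : ℕ, Dom (fun l => f (c :: l)) (fun l => f (c :: l)) :=
        fun c l l' h => hff _ _ (List.Forall₂.cons le_rfl h)
      have hA : A1 ≤ A2 := ih (a+1, b) _ (by simp) (by simpa) (domc _)
      have hB : B1 ≤ B2 := ih (a, b+1) _ (by simpa) (by simp) (domc _)
      have hB1A1 : B1 ≤ A1 := by
        apply S_mono β' hβ' m (a, b+1) (a+1, b) _ _ (by simpa) (by simp) (by simp) (by simpa)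
          (by omega) (by simp only [dd]; omega)
        · intro l l' h
          exact hff _ _ (List.Forall₂.cons (by simp only [dd]; omega) h)
        · exact domc _
      have hB2A2 : B2 ≤ A2 := by
        apply S_mono β hβ m (a, b+1) (a+1, b) _ _ (by simpa) (by simp) (by simp) (by simpa)
          (by omega) (by simp only [dd]; omega)
        · intro l l' h
          exact hff _ _ (List.Forall₂.cons (by simp only [dd]; omega) h)
        · exact domc _
      have hpp : prob β' (a,b) true ≤ prob β (a,b) true := prob_mono_beta hβ' hββ' hb hba
      have hq : prob β' (a,b) false = 1 - prob β' (a,b) true := by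
        have := prob_add (β := β') (x := (a,b)) ha hb; linarith
      have hq' : prob β (a,b) false = 1 - prob β (a,b) true := by
        have := prob_add (β := β) (x := (a,b)) ha hb; linarith
      have hp0 := prob_nonneg (β := β') (x := (a,b)) ha hb true
      have hp1 := prob_le_one (β := β') (x := (a,b)) ha hb true
      have hp0' := prob_nonneg (β := β) (x := (a,b)) ha hb true
      have hp1' := prob_le_one (β := β) (x := (a,b)) ha hb true
      rw [hq, hq']
      nlinarith [mul_le_mul_of_nonneg_left hA hp0,
        mul_le_mul_of_nonneg_left hB (by linarith : (0:ℝ) ≤ 1 - prob β' (a,b) true)]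
    intro x f h1 h2 hff
    obtain ⟨a, b⟩ := x
    simp only at h1 h2
    rcases le_total b a with hn | hn
    · exact core a b f h2 hn hff
    · rw [S_swap β' (m+1) a b, S_swap β (m+1) a b]
      exact core b a f h1 hn hff

lemma S_const (β : ℝ) (c : ℝ) : ∀ m (x : ℕ × ℕ), 1 ≤ x.1 → 1 ≤ x.2 →
    S β m x (fun _ => c) = c := by
  intro m
  induction m with
  | zero => intro x _ _; rfl
  | succ m ih =>
    intro x h1 h2
    have e1 : S β (m+1) x (fun _ => c)
        = prob β x true * c + prob β x false * c := by
      simp only [S]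
      rw [ih _ (stepFn_one h1 h2 _).1 (stepFn_one h1 h2 _).2, ih _ (stepFn_one h1 h2 _).1 (stepFn_one h1 h2 _).2]
    rw [e1, ← add_mul, prob_add h1 h2, one_mul]

lemma S_one_sub (β : ℝ) (c : ℝ) : ∀ m (x : ℕ × ℕ), 1 ≤ x.1 → 1 ≤ x.2 →
    ∀ g : List ℕ → ℝ, S β m x (fun l => c - g l) = c - S β m x g := by
  intro m
  induction m with
  | zero => intro x _ _ g; rfl
  | succ m ih =>
    intro x h1 h2 g
    simp only [S]
    rw [ih _ (stepFn_one h1 h2 _).1 (stepFn_one h1 h2 _).2,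
        ih _ (stepFn_one h1 h2 _).1 (stepFn_one h1 h2 _).2]
    linear_combination c * (prob_add (β := β) h1 h2)

def words : ℕ → List (List Bool)
  | 0 => [[]]
  | m + 1 => ((words m).map (List.cons true)) ++ ((words m).map (List.cons false))

def wt (β : ℝ) : ℕ × ℕ → List Bool → ℝ
  | _, [] => 1
  | x, b :: w => prob β x b * wt β (stepFn x b) w

def dl : ℕ × ℕ → List Bool → List ℕ
  | _, [] => []
  | x, b :: w => dd (stepFn x b) :: dl (stepFn x b) w

def pathF (x : ℕ × ℕ) (w : List Bool) : ℕ → ℕ × ℕ := fun t => List.foldl stepFn x (w.take t)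

lemma words_length : ∀ m, ∀ w ∈ words m, w.length = m := by
  intro m
  induction m with
  | zero => intro w hw; simp [words] at hw; simp [hw]
  | succ m ih =>
    intro w hw
    simp only [words, List.mem_append, List.mem_map] at hw
    rcases hw with ⟨w', hw', rfl⟩ | ⟨w', hw', rfl⟩ <;> simp [ih _ hw']

lemma words_nodup : ∀ m, (words m).Nodup := by
  intro m
  induction m with
  | zero => simp [words]
  | succ m ih =>
    simp only [words]
    refine List.Nodup.append (ih.map ?_) (ih.map ?_) ?_
    · exact fun a b h => by simpa using h
    · exact fun a b h => by simpa using h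
    · intro w hw hw'
      simp only [List.mem_map] at hw hw'
      obtain ⟨a, _, rfl⟩ := hw
      obtain ⟨b, _, h⟩ := hw'
      simp at h

lemma sum_map_mul (l : List (List Bool)) (c : ℝ) (F : List Bool → ℝ) :
    (l.map (fun a => c * F a)).sum = c * (l.map F).sum := by
  induction l with
  | nil => simp
  | cons a l ih => simp [ih]; ring

lemma S_eq_sum (β : ℝ) : ∀ m (x : ℕ × ℕ) (f : List ℕ → ℝ),
    S β m x f = ((words m).map (fun w => wt β x w * f (dl x w))).sum := by
  intro m
  induction m with
  | zero => intro x f; simp [words, S, wt, dl]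
  | succ m ih =>
    intro x f
    simp only [words, List.map_append, List.sum_append, List.map_map]
    have e1 : ∀ b : Bool, ((words m).map ((fun w => wt β x w * f (dl x w)) ∘ List.cons b)).sum
        = prob β x b * S β m (stepFn x b) (fun l => f (dd (stepFn x b) :: l)) := by
      intro b
      rw [ih]
      rw [← sum_map_mul]
      congr 1
      apply List.map_congr_left
      intro w _
      simp only [Function.comp, wt, dl]
      ring
    rw [e1 true, e1 false]
    rfl

lemma wt_nonneg (β : ℝ) : ∀ (w : List Bool) (x : ℕ × ℕ), 1 ≤ x.1 → 1 ≤ x.2 → 0 ≤ wt β x w := by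
  intro w
  induction w with
  | nil => intro x _ _; simp [wt]
  | cons b w ih =>
    intro x h1 h2
    exact mul_nonneg (prob_nonneg h1 h2 b) (ih _ (stepFn_one h1 h2 b).1 (stepFn_one h1 h2 b).2)

lemma pathF_zero (x : ℕ × ℕ) (w : List Bool) : pathF x w 0 = x := rfl

lemma pathF_cons (x : ℕ × ℕ) (b : Bool) (w : List Bool) (t : ℕ) :
    pathF x (b :: w) (t + 1) = pathF (stepFn x b) w t := rfl

lemma urnStep_step (β : ℝ) (x : ℕ × ℕ) (b : Bool) :
    urnStep β 1 x (stepFn x b) = prob β x b := by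
  cases b
  · have hne : (x.1, x.2 + 1) ≠ (x.1 + 1, x.2) := by
      simp [Prod.ext_iff]
    simp [urnStep, stepFn, prob, hne]
  · simp [urnStep, stepFn, prob]

lemma stepFn_inj (x : ℕ × ℕ) (b b' : Bool) (h : stepFn x b = stepFn x b') : b = b' := by
  cases b <;> cases b' <;> simp_all [stepFn, Prod.ext_iff]

lemma prod_urnStep (β : ℝ) : ∀ (w : List Bool) (x : ℕ × ℕ),
    ∏ t ∈ Finset.range w.length, urnStep β 1 (pathF x w t) (pathF x w (t + 1)) = wt β x w := by
  intro w
  induction w with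
  | nil => intro x; simp [wt]
  | cons b w ih =>
    intro x
    rw [List.length_cons, Finset.prod_range_succ']
    have h0 : pathF x (b :: w) 0 = x := rfl
    have h1 : pathF x (b :: w) 1 = stepFn x b := rfl
    rw [h0, h1, urnStep_step]
    have : ∀ t, pathF x (b :: w) (t + 1) = pathF (stepFn x b) w t := fun t => rfl
    simp only [this]
    rw [ih (stepFn x b), wt]
    ring

lemma dl_eq : ∀ (w : List Bool) (x : ℕ × ℕ),
    dl x w = (List.range w.length).map (fun j => dd (pathF x w (j + 1))) := by
  intro w
  induction w with
  | nil => intro x; simp [dl]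
  | cons b w ih =>
    intro x
    rw [List.length_cons, List.range_succ_eq_map, List.map_cons, List.map_map]
    show dd (stepFn x b) :: dl (stepFn x b) w = dd (pathF x (b::w) 1) :: _
    congr 1
    rw [ih (stepFn x b)]
    apply List.map_congr_left
    intro j _
    rfl

lemma pathF_inj : ∀ (w w' : List Bool) (x : ℕ × ℕ), w.length = w'.length →
    (∀ t ≤ w.length, pathF x w t = pathF x w' t) → w = w' := by
  intro w
  induction w with
  | nil => intro w' x hl _; exact (List.length_eq_zero_iff.mp hl.symm).symm
  | cons b w ih =>
    intro w' x hl hag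
    cases w' with
    | nil => simp at hl
    | cons b' w'' =>
      have hb : b = b' := by
        have := hag 1 (by simp)
        exact stepFn_inj x b b' this
      subst hb
      have : w = w'' := by
        apply ih w'' (stepFn x b) (by simpa using hl)
        intro t ht
        have := hag (t + 1) (by simpa using ht)
        simpa [pathF_cons] using this
      rw [this]

-- measurability helpers
lemma meas_all_pi (k : ℕ) (s : Set (Fin k → ℕ × ℕ)) : MeasurableSet s := by
  have hsing : ∀ v : Fin k → ℕ × ℕ, MeasurableSet {v} := by
    intro v
    have : {v} = ⋂ j, (fun u : Fin k → ℕ × ℕ => u j) ⁻¹' {v j} := by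
      ext u
      simp [funext_iff]
    rw [this]
    exact MeasurableSet.iInter fun j => (measurable_pi_apply j) (measurableSet_singleton _)
  have : s = ⋃ v ∈ s, {v} := by simp
  rw [this]
  exact MeasurableSet.biUnion s.to_countable fun v _ => hsing v

lemma meas_findep (m : ℕ) (E : Set (ℕ → ℕ × ℕ))
    (h : ∀ ω ω' : ℕ → ℕ × ℕ, (∀ t ≤ m, ω t = ω' t) → (ω ∈ E ↔ ω' ∈ E)) :
    MeasurableSet E := by
  set R : (ℕ → ℕ × ℕ) → (Fin (m + 1) → ℕ × ℕ) := fun ω j => ω j with hR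
  have hRm : Measurable R := measurable_pi_lambda _ fun j => measurable_pi_apply _
  have hE : E = R ⁻¹' (R '' E) := by
    ext ω
    constructor
    · exact fun hω => Set.mem_image_of_mem R hω
    · rintro ⟨ω', hω', hRe⟩
      refine (h ω' ω ?_).mp hω'
      intro t ht
      have := congrFun hRe ⟨t, by omega⟩
      simpa using this
  rw [hE]
  exact hRm (meas_all_pi _ _)

theorem bridge {μ : Measure (ℕ → ℕ × ℕ)} {β : ℝ} {x₀ : ℕ × ℕ}
    (hμ : IsUrnProcess μ β 1 x₀) (h1 : 1 ≤ x₀.1) (h2 : 1 ≤ x₀.2) (m : ℕ)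
    (E : Set (ℕ → ℕ × ℕ)) (hE : MeasurableSet E) (Qb : List ℕ → Bool)
    (hQ : ∀ ω : ℕ → ℕ × ℕ, ω 0 = x₀ →
      (ω ∈ E ↔ Qb ((List.range m).map (fun j => dd (ω (j + 1)))) = true)) :
    (μ E).toReal = S β m x₀ (fun l => if Qb l then 1 else 0) := by
  haveI : IsProbabilityMeasure μ := hμ.1
  set C : List Bool → Set (ℕ → ℕ × ℕ) :=
    fun w => {ω | ∀ t ≤ m, ω t = pathF x₀ w t} with hC
  set WF : Finset (List Bool) := (words m).toFinset with hWF
  have hlen : ∀ w ∈ WF, w.length = m := by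
    intro w hw; exact words_length m w (List.mem_toFinset.mp hw)
  have hCmeas : ∀ w, MeasurableSet (C w) := by
    intro w
    apply meas_findep m
    intro ω ω' hag
    constructor
    · intro hω t ht; rw [← hag t ht]; exact hω t ht
    · intro hω t ht; rw [hag t ht]; exact hω t ht
  have hCw : ∀ w ∈ WF, μ (C w) = ENNReal.ofReal (wt β x₀ w) := by
    intro w hw
    have hp0 : pathF x₀ w 0 = x₀ := rfl
    have := hμ.2 m (pathF x₀ w) hp0
    rw [← hlen w hw] at this
    rw [prod_urnStep β w x₀] at this
    rw [hlen w hw] at this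
    have hfin : μ (C w) ≠ ⊤ := measure_ne_top μ _
    rw [← this, ENNReal.ofReal_toReal hfin]
  have hdisj : (↑WF : Set (List Bool)).PairwiseDisjoint C := by
    intro w hw w' hw' hne
    rw [Function.onFun, Set.disjoint_left]
    intro ω hω hω'
    apply hne
    apply pathF_inj w w' x₀ (by rw [hlen w hw, hlen w' hw'])
    intro t ht
    rw [← hω t (by rw [← hlen w hw]; exact ht), hω' t (by rw [← hlen w hw]; exact ht)]
  -- total mass of cylinders is 1
  have hsum_wt : ∑ w ∈ WF, ENNReal.ofReal (wt β x₀ w) = 1 := by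
    rw [← ENNReal.ofReal_sum_of_nonneg (fun w _ => wt_nonneg β w x₀ h1 h2)]
    have e : ∑ w ∈ WF, wt β x₀ w = ((words m).map (wt β x₀)).sum :=
      List.sum_toFinset _ (words_nodup m)
    rw [e]
    have e2 : ((words m).map (wt β x₀)).sum = S β m x₀ (fun _ => 1) := by
      rw [S_eq_sum]
      congr 1
      apply List.map_congr_left
      intro w _
      simp
    rw [e2, S_const β 1 m x₀ h1 h2, ENNReal.ofReal_one]
  set TT : Set (ℕ → ℕ × ℕ) := ⋃ w ∈ WF, C w with hTT
  have hTTmeas : MeasurableSet TT := by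
    exact MeasurableSet.biUnion WF.countable_toSet fun w _ => hCmeas w
  have hmuTT : μ TT = 1 := by
    rw [hTT, measure_biUnion_finset hdisj (fun w _ => hCmeas w)]
    rw [Finset.sum_congr rfl hCw]
    exact hsum_wt
  have hcompl : μ TTᶜ = 0 := by
    rw [measure_compl hTTmeas (measure_ne_top μ _), hmuTT, measure_univ, tsub_self]
  have hsplit : μ E = μ (E ∩ TT) := by
    have h1' : μ E = μ (E ∩ TT) + μ (E \ TT) := (measure_inter_add_diff E hTTmeas).symm
    have h2' : μ (E \ TT) = 0 :=
      measure_mono_null (Set.diff_subset_compl E TT) hcompl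
    rw [h1', h2', add_zero]
  have hECw : ∀ w ∈ WF, E ∩ C w = if Qb (dl x₀ w) then C w else ∅ := by
    intro w hw
    have hiff : ∀ ω ∈ C w, (ω ∈ E ↔ Qb (dl x₀ w) = true) := by
      intro ω hω
      have hω0 : ω 0 = x₀ := hω 0 (Nat.zero_le m)
      rw [hQ ω hω0]
      have : (List.range m).map (fun j => dd (ω (j + 1))) = dl x₀ w := by
        rw [dl_eq w x₀, hlen w hw]
        apply List.map_congr_left
        intro j hj
        rw [hω (j+1) (by simpa using List.mem_range.mp hj)]
      rw [this]
    by_cases hQb : Qb (dl x₀ w) = true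
    · rw [if_pos hQb]
      apply Set.inter_eq_right.mpr
      intro ω hω
      exact (hiff ω hω).mpr hQb
    · rw [if_neg hQb]
      ext ω
      simp only [Set.mem_inter_iff, Set.mem_empty_iff_false, iff_false, not_and]
      intro hE' hCw'
      exact hQb ((hiff ω hCw').mp hE')
  have hmuE : μ E = ∑ w ∈ WF, (if Qb (dl x₀ w) then ENNReal.ofReal (wt β x₀ w) else 0) := by
    rw [hsplit, hTT, Set.inter_iUnion₂]
    rw [measure_biUnion_finset (hdisj.mono_on ?_) (fun w hw => hE.inter (hCmeas w))]
    · apply Finset.sum_congr rfl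
      intro w hw
      rw [hECw w hw]
      by_cases hQb : Qb (dl x₀ w) = true
      · rw [if_pos hQb, if_pos hQb, hCw w hw]
      · rw [if_neg hQb, if_neg hQb, measure_empty]
    · intro w hw
      exact Set.inter_subset_right
  rw [hmuE, ENNReal.toReal_sum (fun w _ => by
    split <;> simp [ENNReal.ofReal_ne_top])]
  rw [S_eq_sum, ← List.sum_toFinset _ (words_nodup m)]
  apply Finset.sum_congr rfl
  intro w hw
  by_cases hQb : Qb (dl x₀ w) = true
  · rw [if_pos hQb, if_pos hQb, ENNReal.toReal_ofReal (wt_nonneg β w x₀ h1 h2), mul_one]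
  · rw [if_neg hQb, if_neg hQb, mul_zero, ENNReal.toReal_zero]

lemma dd_zero_iff (y : ℕ × ℕ) : dd y = 0 ↔ y.1 = y.2 := by
  simp only [dd]; omega

lemma numTies_succ (ω : ℕ → ℕ × ℕ) (t : ℕ) :
    numTiesUpTo ω (t + 1)
      = numTiesUpTo ω t + (if (ω (t+1)).1 = (ω (t+1)).2 then 1 else 0) := by
  unfold numTiesUpTo
  rw [Finset.range_add_one, Finset.filter_insert]
  split
  · rw [Finset.card_insert_of_notMem (by simp)]
  · simp

lemma numTies_zero (ω : ℕ → ℕ × ℕ) :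
    numTiesUpTo ω 0 = if (ω 0).1 = (ω 0).2 then 1 else 0 := by
  unfold numTiesUpTo
  simp [Finset.range_one, Finset.filter_singleton]
  split <;> simp

lemma numTies_mono (ω : ℕ → ℕ × ℕ) {s s' : ℕ} (h : s ≤ s') :
    numTiesUpTo ω s ≤ numTiesUpTo ω s' := by
  apply Finset.card_le_card
  apply Finset.filter_subset_filter
  exact Finset.range_subset_range.mpr (by omega)

lemma numTies_formula (ω : ℕ → ℕ × ℕ) : ∀ t : ℕ,
    numTiesUpTo ω t = (if (ω 0).1 = (ω 0).2 then 1 else 0)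
      + ((List.range t).map (fun j => dd (ω (j + 1)))).countP (fun d => d == 0) := by
  intro t
  induction t with
  | zero => simp [numTies_zero]
  | succ t ih =>
    rw [numTies_succ, ih, List.range_succ, List.map_append, List.countP_append]
    simp only [List.map_cons, List.map_nil, List.countP_cons, List.countP_nil]
    have : ((dd (ω (t+1)) == 0) = true) ↔ (ω (t+1)).1 = (ω (t+1)).2 := by
      simp [dd_zero_iff]
    split <;> split <;> simp_all <;> omega

lemma numTies_exists (ω : ℕ → ℕ × ℕ) (n : ℕ) (hn : 1 ≤ n) : ∀ t : ℕ,
    n ≤ numTiesUpTo ω t →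
    ∃ s ≤ t, (ω s).1 = (ω s).2 ∧ numTiesUpTo ω s = n := by
  intro t
  induction t with
  | zero =>
    intro h
    rw [numTies_zero] at h
    by_cases htie : (ω 0).1 = (ω 0).2
    · refine ⟨0, le_rfl, htie, ?_⟩
      rw [numTies_zero, if_pos htie]
      rw [if_pos htie] at h
      omega
    · rw [if_neg htie] at h
      omega
  | succ t ih =>
    intro h
    by_cases hc : n ≤ numTiesUpTo ω t
    · obtain ⟨s, hs, h1, h2⟩ := ih hc
      exact ⟨s, by omega, h1, h2⟩
    · rw [numTies_succ] at h
      by_cases htie : (ω (t+1)).1 = (ω (t+1)).2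
      · refine ⟨t + 1, le_rfl, htie, ?_⟩
        rw [numTies_succ]
        simp only [htie, if_true] at h ⊢
        omega
      · simp [htie] at h; omega

lemma nthTie_char (ω : ℕ → ℕ × ℕ) (n : ℕ) (hn : 1 ≤ n) (t' : ℕ) :
    ((t' + 1 : ℕ) : ℕ∞) ≤ nthTieTime n ω ↔ numTiesUpTo ω t' < n := by
  rw [nthTieTime, le_sInf_iff]
  constructor
  · intro h
    by_contra hc
    push_neg at hc
    obtain ⟨s, hs, h1, h2⟩ := numTies_exists ω n hn t' hc
    have := h (s : ℕ∞) ⟨s, rfl, h1, h2⟩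
    have : (t' + 1 : ℕ) ≤ s := by exact_mod_cast this
    omega
  · rintro hc b ⟨s, rfl, h1, h2⟩
    have hs : t' < s := by
      by_contra hs
      push_neg at hs
      have := numTies_mono ω hs
      omega
    exact_mod_cast Nat.succ_le_of_lt hs

lemma numTies_congr (ω ω' : ℕ → ℕ × ℕ) (m : ℕ) (h : ∀ t ≤ m, ω t = ω' t) :
    ∀ s ≤ m, numTiesUpTo ω s = numTiesUpTo ω' s := by
  intro s hs
  unfold numTiesUpTo
  congr 1
  apply Finset.filter_congr
  intro j hj
  rw [h j (by have := Finset.mem_range.mp hj; omega)]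

lemma countP_zero_antitone : ∀ {l l' : List ℕ}, LE' l l' →
    l'.countP (fun d => d == 0) ≤ l.countP (fun d => d == 0) := by
  intro l l' h
  induction h with
  | nil => simp
  | @cons a b l l' hab _ ih =>
    rw [List.countP_cons, List.countP_cons]
    have himp : (b == 0) = true → (a == 0) = true := by
      simp
      omega
    have hite : (if (b == 0) = true then 1 else 0) ≤ (if (a == 0) = true then 1 else 0) := by
      by_cases hb : (b == 0) = true
      · simp [hb, himp hb]
      · simp [hb]
    omega

/-- For `β ≥ β' ≥ 0` and equal fitness (`r = 1`), the time of the `n`-th tie is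
stochastically increasing in the feedback strength (`T_n(β,1,x₀) ⪰ T_n(β',1,x₀)` for `n ≥ 1`),
while the duration (time of the last tie) is stochastically decreasing
(`T(β,1,x₀) ⪯ T(β',1,x₀)`). -/
theorem stmt_1 (β β' : ℝ) (hβ'0 : 0 ≤ β') (hββ' : β' ≤ β)
    (x₀ : ℕ × ℕ) (hx₁ : 0 < x₀.1) (hx₂ : 0 < x₀.2)
    (μ μ' : Measure (ℕ → ℕ × ℕ))
    (hμ : IsUrnProcess μ β 1 x₀) (hμ' : IsUrnProcess μ' β' 1 x₀) :
    (∀ n : ℕ, 1 ≤ n → ∀ t : ℕ,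
      μ' {ω | (t : ℕ∞) ≤ nthTieTime n ω} ≤ μ {ω | (t : ℕ∞) ≤ nthTieTime n ω}) ∧
    (∀ t : ℕ, μ (durationTail t) ≤ μ' (durationTail t)) := by
  haveI : IsProbabilityMeasure μ := hμ.1
  haveI : IsProbabilityMeasure μ' := hμ'.1
  constructor
  · -- Statement about T_n
    intro n hn t
    match t with
    | 0 =>
      have huniv : {ω : ℕ → ℕ × ℕ | ((0 : ℕ) : ℕ∞) ≤ nthTieTime n ω} = Set.univ := by
        ext ω; simp
      rw [huniv]
      simp [measure_univ]
    | (t' + 1) =>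
      set E : Set (ℕ → ℕ × ℕ) := {ω | ((t' + 1 : ℕ) : ℕ∞) ≤ nthTieTime n ω} with hEdef
      have hset : E = {ω | numTiesUpTo ω t' < n} := Set.ext fun ω => nthTie_char ω n hn t'
      have hE : MeasurableSet E := by
        rw [hset]
        apply meas_findep t'
        intro ω ω' hag
        simp only [Set.mem_setOf_eq]
        rw [numTies_congr ω ω' t' hag t' le_rfl]
      set Qb : List ℕ → Bool := fun l =>
        decide ((if x₀.1 = x₀.2 then 1 else 0) + l.countP (fun d => d == 0) < n) with hQb
      have hQ : ∀ ω : ℕ → ℕ × ℕ, ω 0 = x₀ →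
          (ω ∈ E ↔ Qb ((List.range t').map (fun j => dd (ω (j + 1)))) = true) := by
        intro ω hω0
        rw [hset]
        simp only [Set.mem_setOf_eq, hQb, decide_eq_true_eq]
        rw [numTies_formula ω t', hω0]
      have e1 := bridge hμ hx₁ hx₂ t' E hE Qb hQ
      have e2 := bridge hμ' hx₁ hx₂ t' E hE Qb hQ
      have hdom : Dom (fun l => if Qb l then (1:ℝ) else 0) (fun l => if Qb l then (1:ℝ) else 0) := by
        intro l l' h
        by_cases hl : Qb l = true
        · have hl' : Qb l' = true := by
            simp only [hQb, decide_eq_true_eq] at hl ⊢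
            have := countP_zero_antitone h
            omega
          simp [hl, hl']
        · by_cases hl' : Qb l' = true <;> simp [hl, hl']
      have hS := S_mono_beta hβ'0 hββ' t' x₀ _ hx₁ hx₂ hdom
      rw [← ENNReal.toReal_le_toReal (measure_ne_top μ' E) (measure_ne_top μ E)]
      rw [e1, e2]
      exact hS
  · -- Statement about the duration
    intro t
    set D : ℕ → Set (ℕ → ℕ × ℕ) :=
      fun m => {ω | ∃ s, t ≤ s ∧ s ≤ m ∧ (ω s).1 = (ω s).2} with hDdef
    have hDunion : durationTail t = ⋃ m, D m := by
      ext ω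
      constructor
      · rintro ⟨s, hts, htie⟩
        exact Set.mem_iUnion.mpr ⟨s, s, hts, le_rfl, htie⟩
      · intro h
        obtain ⟨m, s, hts, _, htie⟩ := Set.mem_iUnion.mp h
        exact ⟨s, hts, htie⟩
    have hDmono : Monotone D := by
      intro m m' hmm ω
      rintro ⟨s, hts, hsm, htie⟩
      exact ⟨s, hts, hsm.trans hmm, htie⟩
    have hmeasD : ∀ m, MeasurableSet (D m) := by
      intro m
      apply meas_findep m
      intro ω ω' hag
      constructor
      · rintro ⟨s, hts, hsm, htie⟩
        exact ⟨s, hts, hsm, by rw [← hag s hsm]; exact htie⟩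
      · rintro ⟨s, hts, hsm, htie⟩
        exact ⟨s, hts, hsm, by rw [hag s hsm]; exact htie⟩
    rw [hDunion, hDmono.directed_le.measure_iUnion,
        hDmono.directed_le.measure_iUnion]
    apply iSup_mono
    intro m
    set Qb : List ℕ → Bool := fun l =>
      decide ((t = 0 ∧ x₀.1 = x₀.2) ∨ ∃ j ∈ Finset.range l.length, t ≤ j + 1 ∧ l.getD j 1 = 0)
      with hQb
    have hlget : ∀ (ω : ℕ → ℕ × ℕ) (j : ℕ), j < m →
        ((List.range m).map (fun j => dd (ω (j + 1)))).getD j 1 = dd (ω (j + 1)) := by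
      intro ω j hj
      have hlen : ((List.range m).map (fun j => dd (ω (j + 1)))).length = m := by simp
      rw [List.getD_eq_getElem _ _ (by rw [hlen]; exact hj)]
      simp
    have hQ : ∀ ω : ℕ → ℕ × ℕ, ω 0 = x₀ →
        (ω ∈ D m ↔ Qb ((List.range m).map (fun j => dd (ω (j + 1)))) = true) := by
      intro ω hω0
      simp only [hQb, decide_eq_true_eq, hDdef, Set.mem_setOf_eq, List.length_map,
        List.length_range, Finset.mem_range]
      constructor
      · rintro ⟨s, hts, hsm, htie⟩
        match s with
        | 0 =>
          left
          exact ⟨Nat.le_zero.mp hts, by rw [← hω0]; exact htie⟩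
        | (j + 1) =>
          right
          refine ⟨j, by omega, hts, ?_⟩
          rw [hlget ω j (by omega)]
          exact (dd_zero_iff _).mpr htie
      · rintro (⟨ht0, hx⟩ | ⟨j, hj, htj, hget⟩)
        · exact ⟨0, by omega, by omega, by rw [hω0]; exact hx⟩
        · refine ⟨j + 1, htj, by omega, ?_⟩
          rw [hlget ω j hj] at hget
          exact (dd_zero_iff _).mp hget
    have e1 := bridge hμ hx₁ hx₂ m (D m) (hmeasD m) Qb hQ
    have e2 := bridge hμ' hx₁ hx₂ m (D m) (hmeasD m) Qb hQ
    have hanti : ∀ {l l' : List ℕ}, LE' l l' → Qb l' = true → Qb l = true := by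
      intro l l' h hl'
      have hlen : l.length = l'.length := List.Forall₂.length_eq h
      simp only [hQb, decide_eq_true_eq] at hl' ⊢
      rcases hl' with hleft | ⟨j, hj, htj, hget⟩
      · exact Or.inl hleft
      · right
        have hjl : j < l.length := by rw [hlen]; exact Finset.mem_range.mp hj
        refine ⟨j, Finset.mem_range.mpr hjl, htj, ?_⟩
        have hle : l.getD j 1 ≤ l'.getD j 1 := by
          rw [List.getD_eq_getElem _ _ hjl,
              List.getD_eq_getElem _ _ (by rw [← hlen]; exact hjl)]
          exact (List.forall₂_iff_get.mp h).2 j hjl (by rw [← hlen]; exact hjl)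
        omega
    have hdom : Dom (fun l => (1:ℝ) - (if Qb l then (1:ℝ) else 0))
        (fun l => (1:ℝ) - (if Qb l then (1:ℝ) else 0)) := by
      intro l l' h
      dsimp only
      have : (if Qb l' then (1:ℝ) else 0) ≤ (if Qb l then (1:ℝ) else 0) := by
        by_cases hl' : Qb l' = true
        · simp [hl', hanti h hl']
        · by_cases hl : Qb l = true <;> simp [hl, hl']
      linarith
    have hS := S_mono_beta hβ'0 hββ' m x₀ _ hx₁ hx₂ hdom
    rw [S_one_sub β 1 m x₀ hx₁ hx₂, S_one_sub β' 1 m x₀ hx₁ hx₂] at hS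
    rw [← ENNReal.toReal_le_toReal (measure_ne_top μ (D m)) (measure_ne_top μ' (D m))]
    rw [e1, e2]
    linarith
end
end

section
/- Let β ≥ β' ≥ 0, r, r' ≥ 1, and let x₀ = (x₀₁, x₀₂), x₀' = (x₀₁', x₀₂') be initial states with positive integer entries. Then the time of the first tie satisfies T₁(β, r, x₀) ⪰ T₁(β', r', x₀') if either (i) r ≥ r' and x₀₁ ≥ x₀₁' ≥ x₀₂' ≥ x₀₂, or (ii) r = r' and x₀₁ ≤ x₀₁' ≤ x₀₂' ≤ x₀₂. In particular, T₁(β, r, x₀) ⪰ T₁(β', r, x₀). -/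
open MeasureTheory Filter

noncomputable section

namespace UrnProof

def pUp (β r : ℝ) (x : ℕ × ℕ) : ℝ :=
  r * (x.1 : ℝ) ^ β / (r * (x.1 : ℝ) ^ β + (x.2 : ℝ) ^ β)

def pDn (β r : ℝ) (x : ℕ × ℕ) : ℝ :=
  (x.2 : ℝ) ^ β / (r * (x.1 : ℝ) ^ β + (x.2 : ℝ) ^ β)

lemma urnStep_up (β r : ℝ) (x : ℕ × ℕ) :
    urnStep β r x (x.1 + 1, x.2) = pUp β r x := by
  simp [urnStep, pUp]

lemma urnStep_dn (β r : ℝ) (x : ℕ × ℕ) :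
    urnStep β r x (x.1, x.2 + 1) = pDn β r x := by
  have h : (x.1, x.2 + 1) ≠ (x.1 + 1, x.2) := by
    simp only [ne_eq, Prod.mk.injEq, not_and]
    omega
  simp [urnStep, pDn, h]

lemma urnStep_other (β r : ℝ) (x y : ℕ × ℕ) (h1 : y ≠ (x.1 + 1, x.2))
    (h2 : y ≠ (x.1, x.2 + 1)) : urnStep β r x y = 0 := by
  simp [urnStep, h1, h2]


def M (β r : ℝ) : ℕ → ℕ × ℕ → ℝ
  | 0, _ => 1
  | t + 1, x =>
      if x.1 = x.2 then 0
      else pUp β r x * M β r t (x.1 + 1, x.2) + pDn β r x * M β r t (x.1, x.2 + 1)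

lemma denom_pos {β r : ℝ} (hr : 1 ≤ r) {x : ℕ × ℕ} (hx2 : 0 < x.2) :
    0 < r * (x.1 : ℝ) ^ β + (x.2 : ℝ) ^ β := by
  have h1 : (0:ℝ) < (x.2 : ℝ) ^ β :=
    Real.rpow_pos_of_pos (by exact_mod_cast hx2) β
  have h2 : (0:ℝ) ≤ r * (x.1 : ℝ) ^ β :=
    mul_nonneg (by linarith) (Real.rpow_nonneg (Nat.cast_nonneg _) β)
  linarith

lemma denom_nonneg {β r : ℝ} (hr : 1 ≤ r) (x : ℕ × ℕ) :
    0 ≤ r * (x.1 : ℝ) ^ β + (x.2 : ℝ) ^ β :=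
  add_nonneg (mul_nonneg (by linarith) (Real.rpow_nonneg (Nat.cast_nonneg _) β))
    (Real.rpow_nonneg (Nat.cast_nonneg _) β)

lemma pUp_nonneg {β r : ℝ} (hr : 1 ≤ r) (x : ℕ × ℕ) : 0 ≤ pUp β r x :=
  div_nonneg (mul_nonneg (by linarith) (Real.rpow_nonneg (Nat.cast_nonneg _) β))
    (denom_nonneg hr x)

lemma pDn_nonneg {β r : ℝ} (hr : 1 ≤ r) (x : ℕ × ℕ) : 0 ≤ pDn β r x :=
  div_nonneg (Real.rpow_nonneg (Nat.cast_nonneg _) β) (denom_nonneg hr x)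

lemma pUp_add_pDn {β r : ℝ} (hr : 1 ≤ r) {x : ℕ × ℕ} (hx2 : 0 < x.2) :
    pUp β r x + pDn β r x = 1 := by
  rw [pUp, pDn, ← add_div, div_self (ne_of_gt (denom_pos hr hx2))]

lemma M_nonneg {β r : ℝ} (hr : 1 ≤ r) : ∀ (t : ℕ) (x : ℕ × ℕ), 0 ≤ M β r t x := by
  intro t
  induction t with
  | zero => intro x; simp [M]
  | succ t ih =>
      intro x
      rw [M]
      split
      · exact le_refl 0
      · exact add_nonneg (mul_nonneg (pUp_nonneg hr x) (ih _))
          (mul_nonneg (pDn_nonneg hr x) (ih _))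

lemma rpow_aux {β β' u v u' v' : ℝ} (hβ' : 0 ≤ β') (hββ : β' ≤ β)
    (hu : 0 < u) (huv' : u ≤ v') (huu' : u ≤ u') (hv : 0 ≤ v) (hvv' : v ≤ v') :
    u ^ β * v ^ β' ≤ u' ^ β' * v' ^ β := by
  have hv' : (0:ℝ) < v' := lt_of_lt_of_le hu huv'
  have h0 : u ^ β = u ^ β' * u ^ (β - β') := by
    rw [← Real.rpow_add hu]; ring_nf
  have h1 : u ^ β' ≤ u' ^ β' := Real.rpow_le_rpow hu.le huu' hβ'
  have h2 : u ^ (β - β') ≤ v' ^ (β - β') :=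
    Real.rpow_le_rpow hu.le huv' (by linarith)
  have h3 : v ^ β' ≤ v' ^ β' := Real.rpow_le_rpow hv hvv' hβ'
  have h4 : u ^ β ≤ u' ^ β' * v' ^ (β - β') := by
    rw [h0]
    exact mul_le_mul h1 h2 (Real.rpow_nonneg hu.le _) (Real.rpow_nonneg (by linarith) _)
  calc u ^ β * v ^ β' ≤ (u' ^ β' * v' ^ (β - β')) * v' ^ β' :=
        mul_le_mul h4 h3 (Real.rpow_nonneg hv _)
          (mul_nonneg (Real.rpow_nonneg (by linarith) _) (Real.rpow_nonneg hv'.le _))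
    _ = u' ^ β' * v' ^ β := by
        rw [mul_assoc, ← Real.rpow_add hv']; ring_nf

/-- Case (i): the leading coordinate is 1; `pUp` is larger for the more imbalanced chain. -/
lemma pUp_mono_i {β β' r r' : ℝ} (hβ' : 0 ≤ β') (hββ : β' ≤ β) (hr : 1 ≤ r) (hr' : 1 ≤ r')
    (hrr : r' ≤ r) {x x' : ℕ × ℕ} (hx2 : 0 < x.2)
    (h1 : x'.1 ≤ x.1) (h2 : x'.2 ≤ x'.1) (h3 : x.2 ≤ x'.2) :
    pUp β' r' x' ≤ pUp β r x := by
  have hx2' : 0 < x'.2 := lt_of_lt_of_le hx2 h3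
  have hdn : pDn β r x ≤ pDn β' r' x' := by
    rw [pDn, pDn, div_le_div_iff₀ (denom_pos hr hx2) (denom_pos hr' hx2')]
    have key : (x.2:ℝ) ^ β * (x'.1:ℝ) ^ β' ≤ (x'.2:ℝ) ^ β' * (x.1:ℝ) ^ β := by
      apply rpow_aux hβ' hββ (by exact_mod_cast hx2)
      · exact_mod_cast le_trans h3 (le_trans h2 h1)
      · exact_mod_cast h3
      · exact Nat.cast_nonneg _
      · exact_mod_cast h1
    have hKnn : (0:ℝ) ≤ (x.2:ℝ) ^ β * (x'.1:ℝ) ^ β' :=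
      mul_nonneg (Real.rpow_nonneg (Nat.cast_nonneg _) _) (Real.rpow_nonneg (Nat.cast_nonneg _) _)
    have hrK : r' * ((x.2:ℝ) ^ β * (x'.1:ℝ) ^ β') ≤ r * ((x'.2:ℝ) ^ β' * (x.1:ℝ) ^ β) :=
      le_trans (mul_le_mul_of_nonneg_left key (by linarith))
        (mul_le_mul_of_nonneg_right hrr (le_trans hKnn key))
    nlinarith [hrK]
  have e1 := pUp_add_pDn (β := β) hr hx2
  have e2 := pUp_add_pDn (β := β') hr' hx2'
  linarith

/-- Case (ii): the leading coordinate is 2 and `r = r'`. -/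
lemma pUp_mono_ii {β β' r : ℝ} (hβ' : 0 ≤ β') (hββ : β' ≤ β) (hr : 1 ≤ r)
    {x x' : ℕ × ℕ} (hx1 : 0 < x.1)
    (h1 : x.1 ≤ x'.1) (h2 : x'.1 ≤ x'.2) (h3 : x'.2 ≤ x.2) :
    pUp β r x ≤ pUp β' r x' := by
  have hx2' : 0 < x'.2 := lt_of_lt_of_le (lt_of_lt_of_le hx1 h1) h2
  have hx2 : 0 < x.2 := lt_of_lt_of_le hx2' h3
  have hdn : pDn β' r x' ≤ pDn β r x := by
    rw [pDn, pDn, div_le_div_iff₀ (denom_pos hr hx2') (denom_pos hr hx2)]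
    have key : (x.1:ℝ) ^ β * (x'.2:ℝ) ^ β' ≤ (x'.1:ℝ) ^ β' * (x.2:ℝ) ^ β := by
      apply rpow_aux hβ' hββ (by exact_mod_cast hx1)
      · exact_mod_cast le_trans h1 (le_trans h2 h3)
      · exact_mod_cast h1
      · exact Nat.cast_nonneg _
      · exact_mod_cast h3
    nlinarith [key, mul_le_mul_of_nonneg_left key (by linarith : (0:ℝ) ≤ r)]
  have e1 := pUp_add_pDn (β := β) hr hx2
  have e2 := pUp_add_pDn (β := β') hr hx2'
  linarith

lemma M_le : ∀ (t : ℕ) (β β' r r' : ℝ), 0 ≤ β' → β' ≤ β → 1 ≤ r → 1 ≤ r' →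
    ∀ x x' : ℕ × ℕ, 0 < x.1 → 0 < x.2 → 0 < x'.1 → 0 < x'.2 →
    ((r' ≤ r ∧ x'.1 ≤ x.1 ∧ x'.2 ≤ x'.1 ∧ x.2 ≤ x'.2) ∨
     (r = r' ∧ x.1 ≤ x'.1 ∧ x'.1 ≤ x'.2 ∧ x'.2 ≤ x.2)) →
    M β' r' t x' ≤ M β r t x := by
  intro t
  induction t with
  | zero => intro β β' r r' _ _ _ _ x x' _ _ _ _ _; simp [M]
  | succ t ih =>
      intro β β' r r' hβ' hββ hr hr' x x' hx1 hx2 hx1' hx2' hcase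
      by_cases htie : x'.1 = x'.2
      · rw [M, if_pos htie]; exact M_nonneg hr _ _
      rcases hcase with ⟨hrr, h1, h2, h3⟩ | ⟨hrr, h1, h2, h3⟩
      · -- case (i)
        have h2s : x'.2 < x'.1 := lt_of_le_of_ne h2 (Ne.symm htie)
        have hxne : x.1 ≠ x.2 := by omega
        simp only [M, if_neg htie, if_neg hxne]
        have hBA' : M β' r' t (x'.1, x'.2 + 1) ≤ M β' r' t (x'.1 + 1, x'.2) :=
          ih β' β' r' r' hβ' le_rfl hr' hr' (x'.1 + 1, x'.2) (x'.1, x'.2 + 1)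
            (Nat.succ_pos _) hx2' hx1' (Nat.succ_pos _)
            (Or.inl ⟨le_rfl, Nat.le_succ _, h2s, Nat.le_succ _⟩)
        have hA'A : M β' r' t (x'.1 + 1, x'.2) ≤ M β r t (x.1 + 1, x.2) :=
          ih β β' r r' hβ' hββ hr hr' (x.1 + 1, x.2) (x'.1 + 1, x'.2)
            (Nat.succ_pos _) hx2 (Nat.succ_pos _) hx2'
            (Or.inl ⟨hrr, Nat.succ_le_succ h1, h2.trans (Nat.le_succ _), h3⟩)
        have hB'B : M β' r' t (x'.1, x'.2 + 1) ≤ M β r t (x.1, x.2 + 1) :=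
          ih β β' r r' hβ' hββ hr hr' (x.1, x.2 + 1) (x'.1, x'.2 + 1)
            hx1 (Nat.succ_pos _) hx1' (Nat.succ_pos _)
            (Or.inl ⟨hrr, h1, h2s, Nat.succ_le_succ h3⟩)
        have hp : pUp β' r' x' ≤ pUp β r x := pUp_mono_i hβ' hββ hr hr' hrr hx2 h1 h2 h3
        have e1 := pUp_add_pDn (β := β) hr hx2
        have e2 := pUp_add_pDn (β := β') hr' (lt_of_lt_of_le hx2 h3)
        have hpu := pUp_nonneg (β := β) hr x
        have hpd := pDn_nonneg (β := β) hr x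
        have m1 := mul_le_mul_of_nonneg_left hA'A hpu
        have m2 := mul_le_mul_of_nonneg_left hB'B hpd
        have m3 := mul_le_mul_of_nonneg_right hp (sub_nonneg.mpr hBA')
        have m4 : pDn β' r' x' * M β' r' t (x'.1, x'.2 + 1)
            = M β' r' t (x'.1, x'.2 + 1) - pUp β' r' x' * M β' r' t (x'.1, x'.2 + 1) := by
          rw [show pDn β' r' x' = 1 - pUp β' r' x' from by linarith]; ring
        have m5 : pDn β r x * M β' r' t (x'.1, x'.2 + 1)
            = M β' r' t (x'.1, x'.2 + 1) - pUp β r x * M β' r' t (x'.1, x'.2 + 1) := by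
          rw [show pDn β r x = 1 - pUp β r x from by linarith]; ring
        linarith [m1, m2, m3, m4, m5]
      · -- case (ii)
        have h2s : x'.1 < x'.2 := lt_of_le_of_ne h2 htie
        have hxne : x.1 ≠ x.2 := by omega
        simp only [M, if_neg htie, if_neg hxne]
        have hAB' : M β' r' t (x'.1 + 1, x'.2) ≤ M β' r' t (x'.1, x'.2 + 1) :=
          ih β' β' r' r' hβ' le_rfl hr' hr' (x'.1, x'.2 + 1) (x'.1 + 1, x'.2)
            hx1' (Nat.succ_pos _) (Nat.succ_pos _) hx2'
            (Or.inr ⟨rfl, Nat.le_succ _, h2s, Nat.le_succ _⟩)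
        have hA'A : M β' r' t (x'.1 + 1, x'.2) ≤ M β r t (x.1 + 1, x.2) :=
          ih β β' r r' hβ' hββ hr hr' (x.1 + 1, x.2) (x'.1 + 1, x'.2)
            (Nat.succ_pos _) hx2 (Nat.succ_pos _) hx2'
            (Or.inr ⟨hrr, Nat.succ_le_succ h1, h2s, h3⟩)
        have hB'B : M β' r' t (x'.1, x'.2 + 1) ≤ M β r t (x.1, x.2 + 1) :=
          ih β β' r r' hβ' hββ hr hr' (x.1, x.2 + 1) (x'.1, x'.2 + 1)
            hx1 (Nat.succ_pos _) hx1' (Nat.succ_pos _)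
            (Or.inr ⟨hrr, h1, h2.trans (Nat.le_succ _), Nat.succ_le_succ h3⟩)
        have hp : pUp β r x ≤ pUp β' r' x' := by
          subst hrr; exact pUp_mono_ii hβ' hββ hr hx1 h1 h2 h3
        have e1 := pUp_add_pDn (β := β) hr hx2
        have e2 := pUp_add_pDn (β := β') hr' hx2'
        have hpu := pUp_nonneg (β := β) hr x
        have hpd := pDn_nonneg (β := β) hr x
        have m1 := mul_le_mul_of_nonneg_left hA'A hpu
        have m2 := mul_le_mul_of_nonneg_left hB'B hpd
        have m3 := mul_le_mul_of_nonneg_right hp (sub_nonneg.mpr hAB')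
        have m4 : pDn β' r' x' * M β' r' t (x'.1, x'.2 + 1)
            = M β' r' t (x'.1, x'.2 + 1) - pUp β' r' x' * M β' r' t (x'.1, x'.2 + 1) := by
          rw [show pDn β' r' x' = 1 - pUp β' r' x' from by linarith]; ring
        have m5 : pDn β r x * M β' r' t (x'.1, x'.2 + 1)
            = M β' r' t (x'.1, x'.2 + 1) - pUp β r x * M β' r' t (x'.1, x'.2 + 1) := by
          rw [show pDn β r x = 1 - pUp β r x from by linarith]; ring
        linarith [m1, m2, m3, m4, m5]


def Cyl (p : ℕ → ℕ × ℕ) (n : ℕ) : Set (ℕ → ℕ × ℕ) := {ω | ∀ s ≤ n, ω s = p s}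

def NoTie (a b : ℕ) : Set (ℕ → ℕ × ℕ) := {ω | ∀ s, a ≤ s → s ≤ b → (ω s).1 ≠ (ω s).2}

lemma measurableSet_cyl (p : ℕ → ℕ × ℕ) (n : ℕ) : MeasurableSet (Cyl p n) := by
  have h : Cyl p n = ⋂ (s : ℕ), ⋂ (_ : s ≤ n), (fun ω : ℕ → ℕ × ℕ => ω s) ⁻¹' {p s} := by
    ext ω; simp [Cyl]
  rw [h]
  exact MeasurableSet.iInter fun s => MeasurableSet.iInter fun _ =>
    measurable_pi_apply s (measurableSet_singleton _)

lemma measurableSet_tie_at (s : ℕ) :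
    MeasurableSet {ω : ℕ → ℕ × ℕ | (ω s).1 = (ω s).2} := by
  have h : {ω : ℕ → ℕ × ℕ | (ω s).1 = (ω s).2}
      = ⋃ k : ℕ, (fun ω : ℕ → ℕ × ℕ => ω s) ⁻¹' {((k, k) : ℕ × ℕ)} := by
    ext ω
    simp only [Set.mem_setOf_eq, Set.mem_iUnion, Set.mem_preimage, Set.mem_singleton_iff,
      Prod.ext_iff]
    constructor
    · intro h; exact ⟨(ω s).2, h, rfl⟩
    · rintro ⟨k, h1, h2⟩; rw [h1, h2]
  rw [h]
  exact MeasurableSet.iUnion fun k => measurable_pi_apply s (measurableSet_singleton _)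

lemma measurableSet_noTie (a b : ℕ) : MeasurableSet (NoTie a b) := by
  have h : NoTie a b = ⋂ (s : ℕ), ⋂ (_ : a ≤ s), ⋂ (_ : s ≤ b),
      {ω : ℕ → ℕ × ℕ | (ω s).1 = (ω s).2}ᶜ := by
    ext ω; simp [NoTie]
  rw [h]
  exact MeasurableSet.iInter fun s => MeasurableSet.iInter fun _ =>
    MeasurableSet.iInter fun _ => (measurableSet_tie_at s).compl

lemma urnStep_nonneg {β r : ℝ} (hr : 1 ≤ r) (x y : ℕ × ℕ) : 0 ≤ urnStep β r x y := by
  unfold urnStep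
  split
  · exact pUp_nonneg hr x
  · split
    · exact pDn_nonneg hr x
    · exact le_rfl

lemma cyl_measure {β r : ℝ} {μ : Measure (ℕ → ℕ × ℕ)} {x₀ : ℕ × ℕ}
    (hμ : IsUrnProcess μ β r x₀) (n : ℕ) (p : ℕ → ℕ × ℕ) (hp0 : p 0 = x₀) :
    μ (Cyl p n) = ENNReal.ofReal (∏ s ∈ Finset.range n, urnStep β r (p s) (p (s + 1))) := by
  haveI := hμ.1
  rw [← hμ.2 n p hp0, ENNReal.ofReal_toReal (measure_ne_top μ _)]
  rfl

lemma main_formula {β r : ℝ} (hr : 1 ≤ r) {μ : Measure (ℕ → ℕ × ℕ)} {x₀ : ℕ × ℕ}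
    (hμ : IsUrnProcess μ β r x₀) :
    ∀ (t n : ℕ) (p : ℕ → ℕ × ℕ), p 0 = x₀ → 0 < (p n).1 → 0 < (p n).2 →
    μ (Cyl p n ∩ NoTie n (n + t))
      = ENNReal.ofReal
          ((∏ s ∈ Finset.range n, urnStep β r (p s) (p (s + 1))) * M β r (t + 1) (p n)) := by
  haveI := hμ.1
  intro t
  induction t with
  | zero =>
      intro n p hp0 hp1 hp2
      by_cases htie : (p n).1 = (p n).2
      · have hempty : Cyl p n ∩ NoTie n (n + 0) = ∅ := by
          ext ω
          simp only [Set.mem_inter_iff, Set.mem_empty_iff_false, iff_false, not_and]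
          intro hc hnt
          exact hnt n le_rfl (Nat.le_add_right n 0) (by rw [hc n le_rfl]; exact htie)
        rw [hempty, show M β r 1 (p n) = 0 from by simp [M, htie]]
        simp
      · have heq : Cyl p n ∩ NoTie n (n + 0) = Cyl p n := by
          apply Set.inter_eq_self_of_subset_left
          intro ω hω s hs1 hs2
          have hsn : s = n := le_antisymm (by omega) hs1
          subst hsn
          rw [hω s le_rfl]; exact htie
        rw [heq, cyl_measure hμ n p hp0,
          show M β r 1 (p n) = 1 from by
            simp only [M, htie, if_false, mul_one]
            exact pUp_add_pDn hr hp2,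
          mul_one]
  | succ t ih =>
      intro n p hp0 hp1 hp2
      by_cases htie : (p n).1 = (p n).2
      · have hempty : Cyl p n ∩ NoTie n (n + (t + 1)) = ∅ := by
          ext ω
          simp only [Set.mem_inter_iff, Set.mem_empty_iff_false, iff_false, not_and]
          intro hc hnt
          exact hnt n le_rfl (Nat.le_add_right _ _) (by rw [hc n le_rfl]; exact htie)
        rw [hempty, show M β r (t + 1 + 1) (p n) = 0 from by rw [M, if_pos htie]]
        simp
      · set q : (ℕ × ℕ) → ℕ → ℕ × ℕ := fun y s => if s ≤ n then p s else y with hq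
        have hq0 : ∀ y, q y 0 = x₀ := fun y => by simp [hq, Nat.zero_le n, hp0]
        have hqn : ∀ y s, s ≤ n → q y s = p s := fun y s hs => by simp [hq, hs]
        have hqn1 : ∀ y, q y (n + 1) = y := fun y => by
          simp [hq, Nat.not_succ_le_self n]
        have hprod : ∀ y, (∏ s ∈ Finset.range (n + 1), urnStep β r (q y s) (q y (s + 1)))
            = (∏ s ∈ Finset.range n, urnStep β r (p s) (p (s + 1))) * urnStep β r (p n) y := by
          intro y
          rw [Finset.prod_range_succ, hqn y n le_rfl, hqn1 y]
          congr 1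
          apply Finset.prod_congr rfl
          intro s hs
          rw [Finset.mem_range] at hs
          rw [hqn y s (le_of_lt hs), hqn y (s + 1) hs]
        have hun : Cyl p n ∩ NoTie n (n + (t + 1))
            = ⋃ y : ℕ × ℕ, (Cyl (q y) (n + 1) ∩ NoTie (n + 1) ((n + 1) + t)) := by
          ext ω
          simp only [Set.mem_inter_iff, Set.mem_iUnion]
          constructor
          · rintro ⟨hc, hnt⟩
            refine ⟨ω (n + 1), ⟨?_, ?_⟩⟩
            · intro s hs
              rcases Nat.lt_or_ge s (n + 1) with h | h
              · rw [hqn _ s (by omega), hc s (by omega)]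
              · have : s = n + 1 := by omega
                subst this; rw [hqn1]
            · intro s hs1 hs2
              exact hnt s (by omega) (by omega)
          · rintro ⟨y, hc, hnt⟩
            refine ⟨fun s hs => by rw [hc s (by omega), hqn y s hs], ?_⟩
            intro s hs1 hs2
            rcases Nat.lt_or_ge s (n + 1) with h | h
            · have hsn : s = n := by omega
              subst hsn
              rw [hc s (by omega), hqn y s le_rfl]
              exact htie
            · exact hnt s h (by omega)
        have hdisj : Pairwise (Function.onFun Disjoint
            (fun y : ℕ × ℕ => Cyl (q y) (n + 1) ∩ NoTie (n + 1) ((n + 1) + t))) := by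
          intro y y' hyy
          refine Set.disjoint_left.mpr ?_
          rintro ω ⟨hc, -⟩ ⟨hc', -⟩
          exact hyy (by rw [← hqn1 y, ← hc (n + 1) le_rfl, hc' (n + 1) le_rfl, hqn1 y'])
        have hmeas : ∀ y : ℕ × ℕ,
            MeasurableSet (Cyl (q y) (n + 1) ∩ NoTie (n + 1) ((n + 1) + t)) :=
          fun y => (measurableSet_cyl _ _).inter (measurableSet_noTie _ _)
        rw [hun, measure_iUnion hdisj hmeas]
        set y1 : ℕ × ℕ := ((p n).1 + 1, (p n).2) with hy1
        set y2 : ℕ × ℕ := ((p n).1, (p n).2 + 1) with hy2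
        have hy12 : y1 ≠ y2 := by
          simp only [hy1, hy2, ne_eq, Prod.mk.injEq, not_and]
          omega
        have hzero : ∀ y : ℕ × ℕ, y ∉ ({y1, y2} : Finset (ℕ × ℕ)) →
            μ (Cyl (q y) (n + 1) ∩ NoTie (n + 1) ((n + 1) + t)) = 0 := by
          intro y hy
          simp only [Finset.mem_insert, Finset.mem_singleton, not_or] at hy
          have hstep0 : urnStep β r (p n) y = 0 := by
            apply urnStep_other
            · exact hy.1
            · exact hy.2
          have hle : μ (Cyl (q y) (n + 1) ∩ NoTie (n + 1) ((n + 1) + t))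
              ≤ μ (Cyl (q y) (n + 1)) := measure_mono Set.inter_subset_left
          rw [cyl_measure hμ (n + 1) (q y) (hq0 y), hprod y, hstep0, mul_zero,
            ENNReal.ofReal_zero] at hle
          exact le_antisymm hle zero_le
        rw [tsum_eq_sum hzero, Finset.sum_pair hy12]
        have happ : ∀ y : ℕ × ℕ, 0 < y.1 → 0 < y.2 →
            μ (Cyl (q y) (n + 1) ∩ NoTie (n + 1) ((n + 1) + t))
              = ENNReal.ofReal
                  ((∏ s ∈ Finset.range n, urnStep β r (p s) (p (s + 1)))
                    * urnStep β r (p n) y * M β r (t + 1) y) := by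
          intro y hy1' hy2'
          have := ih (n + 1) (q y) (hq0 y) (by rw [hqn1]; exact hy1') (by rw [hqn1]; exact hy2')
          rw [hqn1] at this
          rw [this, hprod y]
        rw [happ y1 (Nat.succ_pos _) hp2, happ y2 hp1 (Nat.succ_pos _)]
        have hPnn : 0 ≤ ∏ s ∈ Finset.range n, urnStep β r (p s) (p (s + 1)) :=
          Finset.prod_nonneg fun s _ => urnStep_nonneg hr _ _
        rw [← ENNReal.ofReal_add
          (mul_nonneg (mul_nonneg hPnn (urnStep_nonneg hr _ _)) (M_nonneg hr _ _))
          (mul_nonneg (mul_nonneg hPnn (urnStep_nonneg hr _ _)) (M_nonneg hr _ _))]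
        congr 1
        have hstep1 : urnStep β r (p n) y1 = pUp β r (p n) := urnStep_up β r (p n)
        have hstep2 : urnStep β r (p n) y2 = pDn β r (p n) := urnStep_dn β r (p n)
        rw [hstep1, hstep2, show M β r (t + 1 + 1) (p n)
          = pUp β r (p n) * M β r (t + 1) ((p n).1 + 1, (p n).2)
            + pDn β r (p n) * M β r (t + 1) ((p n).1, (p n).2 + 1) from by
            rw [M, if_neg htie]]
        ring

lemma tail_eq (t : ℕ) :
    {ω : ℕ → ℕ × ℕ | ((t + 1 : ℕ) : ℕ∞) ≤ nthTieTime 1 ω} = NoTie 0 t := by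
  ext ω
  simp only [Set.mem_setOf_eq, nthTieTime, le_sInf_iff, NoTie]
  constructor
  · intro h s _ hst htie
    have hex : ∃ j, (ω j).1 = (ω j).2 := ⟨s, htie⟩
    have hs₀ : (ω (Nat.find hex)).1 = (ω (Nat.find hex)).2 := Nat.find_spec hex
    have hcount : numTiesUpTo ω (Nat.find hex) = 1 := by
      unfold numTiesUpTo
      rw [Finset.card_eq_one]
      refine ⟨Nat.find hex, ?_⟩
      ext j
      simp only [Finset.mem_filter, Finset.mem_range, Finset.mem_singleton]
      constructor
      · rintro ⟨hj, htj⟩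
        by_contra hne
        exact Nat.find_min hex (by omega) htj
      · rintro rfl
        exact ⟨Nat.lt_succ_self _, hs₀⟩
    have hmem : ((Nat.find hex : ℕ) : ℕ∞) ∈
        {u : ℕ∞ | ∃ s : ℕ, u = (s : ℕ∞) ∧ (ω s).1 = (ω s).2 ∧ numTiesUpTo ω s = 1} :=
      ⟨Nat.find hex, rfl, hs₀, hcount⟩
    have hle := h _ hmem
    have hle' : (t + 1 : ℕ) ≤ Nat.find hex := by exact_mod_cast hle
    have : Nat.find hex ≤ s := Nat.find_min' hex htie
    omega
  · intro h b hb
    obtain ⟨s, rfl, hts, -⟩ := hb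
    have hst : ¬ s ≤ t := fun hs => h s (Nat.zero_le _) hs hts
    exact_mod_cast Nat.succ_le_of_lt (not_le.mp hst)

lemma measure_tail {β r : ℝ} {μ : Measure (ℕ → ℕ × ℕ)} {x₀ : ℕ × ℕ} (hr : 1 ≤ r)
    (hx1 : 0 < x₀.1) (hx2 : 0 < x₀.2) (hμ : IsUrnProcess μ β r x₀) (t : ℕ) :
    μ {ω | ((t + 1 : ℕ) : ℕ∞) ≤ nthTieTime 1 ω} = ENNReal.ofReal (M β r (t + 1) x₀) := by
  haveI := hμ.1
  rw [tail_eq]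
  set p : ℕ → ℕ × ℕ := fun _ => x₀ with hp
  have hB : μ (Cyl p 0) = 1 := by
    rw [cyl_measure hμ 0 p rfl]; simp
  have hBc : μ (Cyl p 0)ᶜ = 0 := by
    rw [measure_compl (measurableSet_cyl _ _) (measure_ne_top μ _), hB, measure_univ]
    simp
  have hmain := main_formula hr hμ t 0 p rfl hx1 hx2
  rw [Finset.range_zero, Finset.prod_empty, one_mul] at hmain
  have hz : (0 : ℕ) + t = t := Nat.zero_add t
  rw [hz] at hmain
  have h1 : μ (NoTie 0 t) ≤ μ (Cyl p 0 ∩ NoTie 0 t) := by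
    have hsub : NoTie 0 t ⊆ (Cyl p 0 ∩ NoTie 0 t) ∪ (Cyl p 0)ᶜ := by
      intro ω hω
      by_cases hc : ω ∈ Cyl p 0
      · exact Or.inl ⟨hc, hω⟩
      · exact Or.inr hc
    calc μ (NoTie 0 t) ≤ μ ((Cyl p 0 ∩ NoTie 0 t) ∪ (Cyl p 0)ᶜ) := measure_mono hsub
      _ ≤ μ (Cyl p 0 ∩ NoTie 0 t) + μ (Cyl p 0)ᶜ := measure_union_le _ _
      _ = μ (Cyl p 0 ∩ NoTie 0 t) := by rw [hBc, add_zero]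
  have h2 : μ (Cyl p 0 ∩ NoTie 0 t) ≤ μ (NoTie 0 t) := measure_mono Set.inter_subset_right
  rw [le_antisymm h1 h2, hmain]


end UrnProof

/-- For `β ≥ β' ≥ 0`, `r, r' ≥ 1`, the time of the first tie satisfies
`T₁(β,r,x₀) ⪰ T₁(β',r',x₀')` if either
(i) `r ≥ r'` and `x₀₁ ≥ x₀₁' ≥ x₀₂' ≥ x₀₂`, or (ii) `r = r'` and `x₀₁ ≤ x₀₁' ≤ x₀₂' ≤ x₀₂`.
In particular, `T₁(β,r,x₀) ⪰ T₁(β',r,x₀)`. -/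
theorem stmt_2 (β β' r r' : ℝ) (hβ'0 : 0 ≤ β') (hββ' : β' ≤ β) (hr : 1 ≤ r) (hr' : 1 ≤ r')
    (x₀ x₀' : ℕ × ℕ) (hx₁ : 0 < x₀.1) (hx₂ : 0 < x₀.2) (hx₁' : 0 < x₀'.1) (hx₂' : 0 < x₀'.2)
    (μ μ' : Measure (ℕ → ℕ × ℕ))
    (hμ : IsUrnProcess μ β r x₀) (hμ' : IsUrnProcess μ' β' r' x₀') :
    (((r' ≤ r ∧ x₀'.1 ≤ x₀.1 ∧ x₀'.2 ≤ x₀'.1 ∧ x₀.2 ≤ x₀'.2) ∨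
      (r = r' ∧ x₀.1 ≤ x₀'.1 ∧ x₀'.1 ≤ x₀'.2 ∧ x₀'.2 ≤ x₀.2)) →
      ∀ t : ℕ, μ' {ω | (t : ℕ∞) ≤ nthTieTime 1 ω} ≤ μ {ω | (t : ℕ∞) ≤ nthTieTime 1 ω}) ∧
    (∀ ν ν' : Measure (ℕ → ℕ × ℕ), IsUrnProcess ν β r x₀ → IsUrnProcess ν' β' r x₀ →
      ∀ t : ℕ, ν' {ω | (t : ℕ∞) ≤ nthTieTime 1 ω} ≤ ν {ω | (t : ℕ∞) ≤ nthTieTime 1 ω}) := by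
  have part1 : ((r' ≤ r ∧ x₀'.1 ≤ x₀.1 ∧ x₀'.2 ≤ x₀'.1 ∧ x₀.2 ≤ x₀'.2) ∨
      (r = r' ∧ x₀.1 ≤ x₀'.1 ∧ x₀'.1 ≤ x₀'.2 ∧ x₀'.2 ≤ x₀.2)) →
      ∀ t : ℕ, μ' {ω | (t : ℕ∞) ≤ nthTieTime 1 ω} ≤ μ {ω | (t : ℕ∞) ≤ nthTieTime 1 ω} := by
    intro hcase t
    haveI := hμ.1
    haveI := hμ'.1
    match t with
    | 0 =>
        have huniv : {ω : ℕ → ℕ × ℕ | ((0 : ℕ) : ℕ∞) ≤ nthTieTime 1 ω} = Set.univ :=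
          Set.eq_univ_of_forall fun ω => by simp
        rw [huniv, measure_univ, measure_univ]
    | (u + 1) =>
        rw [UrnProof.measure_tail hr hx₁ hx₂ hμ u, UrnProof.measure_tail hr' hx₁' hx₂' hμ' u]
        exact ENNReal.ofReal_le_ofReal
          (UrnProof.M_le (u + 1) β β' r r' hβ'0 hββ' hr hr' x₀ x₀' hx₁ hx₂ hx₁' hx₂' hcase)
  refine ⟨part1, ?_⟩
  intro ν ν' hν hν' t
  haveI := hν.1
  haveI := hν'.1
  match t with
  | 0 =>
      have huniv : {ω : ℕ → ℕ × ℕ | ((0 : ℕ) : ℕ∞) ≤ nthTieTime 1 ω} = Set.univ :=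
        Set.eq_univ_of_forall fun ω => by simp
      rw [huniv, measure_univ, measure_univ]
  | (u + 1) =>
      rw [UrnProof.measure_tail hr hx₁ hx₂ hν u, UrnProof.measure_tail hr hx₁ hx₂ hν' u]
      apply ENNReal.ofReal_le_ofReal
      rcases le_total x₀.2 x₀.1 with h | h
      · exact UrnProof.M_le (u + 1) β β' r r hβ'0 hββ' hr hr x₀ x₀ hx₁ hx₂ hx₁ hx₂
          (Or.inl ⟨le_rfl, le_rfl, h, le_rfl⟩)
      · exact UrnProof.M_le (u + 1) β β' r r hβ'0 hββ' hr hr x₀ x₀ hx₁ hx₂ hx₁ hx₂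
          (Or.inr ⟨rfl, le_rfl, h, le_rfl⟩)
end
end

section
/- Let β ≥ β' ≥ 0, r ≥ 1, and let x₀ be a positive integer. Then the time of the second tie for a process started from the tied state (x₀, x₀) satisfies T₂(β, r, (x₀,x₀)) ⪰ T₂(β', r, (x₀,x₀)). In particular, the probability of ever tying again satisfies P[T₂(β, r, (x₀,x₀)) < ∞] ≤ 2/(r+1). -/
open MeasureTheory Filter

noncomputable section

namespace UrnAux

/-- one step of the urn path: `true` means the first coordinate increments. -/
def stepb (b : Bool) (s : ℕ × ℕ) : ℕ × ℕ := if b then (s.1 + 1, s.2) else (s.1, s.2 + 1)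

/-- the path from `s` driven by choices `c`. -/
def pathFrom : ℕ → (ℕ → Bool) → ℕ × ℕ → ℕ × ℕ
  | 0, _, s => s
  | n+1, c, s => pathFrom n (fun i => c (i+1)) (stepb (c 0) s)

/-- probability of no tie in the next `m` steps, defined by recursion. -/
def gfun (β r : ℝ) : ℕ → ℕ × ℕ → ℝ
  | 0, _ => 1
  | m+1, s =>
      (if s.1 + 1 = s.2 then 0 else urnStep β r s (s.1+1, s.2) * gfun β r m (s.1+1, s.2)) +
      (if s.1 = s.2 + 1 then 0 else urnStep β r s (s.1, s.2+1) * gfun β r m (s.1, s.2+1))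

/-- weight (probability) of the length-`m` path from `s` driven by `c`. -/
def wt (β r : ℝ) (m : ℕ) (c : ℕ → Bool) (s : ℕ × ℕ) : ℝ :=
  ∏ t ∈ Finset.range m, urnStep β r (pathFrom t c s) (pathFrom (t+1) c s)

def extc (m : ℕ) (c : Fin m → Bool) : ℕ → Bool := fun i => if h : i < m then c ⟨i, h⟩ else false

def noTie (m : ℕ) (c : ℕ → Bool) (s : ℕ × ℕ) : Prop :=
  ∀ t ∈ Finset.Icc 1 m, (pathFrom t c s).1 ≠ (pathFrom t c s).2

instance (m : ℕ) (c : ℕ → Bool) (s : ℕ × ℕ) : Decidable (noTie m c s) := by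
  unfold noTie; infer_instance

lemma pathFrom_succ (n : ℕ) (c : ℕ → Bool) (s : ℕ × ℕ) :
    pathFrom (n+1) c s = stepb (c n) (pathFrom n c s) := by
  induction n generalizing c s with
  | zero => rfl
  | succ n ih =>
      show pathFrom (n+1) (fun i => c (i+1)) (stepb (c 0) s) = _
      rw [ih]
      rfl

lemma pathFrom_fst_ge (n : ℕ) (c : ℕ → Bool) (s : ℕ × ℕ) :
    s.1 ≤ (pathFrom n c s).1 ∧ s.2 ≤ (pathFrom n c s).2 := by
  induction n generalizing c s with
  | zero => exact ⟨le_refl _, le_refl _⟩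
  | succ n ih =>
      have h := ih (fun i => c (i+1)) (stepb (c 0) s)
      have h1 : s.1 ≤ (stepb (c 0) s).1 ∧ s.2 ≤ (stepb (c 0) s).2 := by
        cases c 0 <;> simp [stepb]
      exact ⟨le_trans h1.1 h.1, le_trans h1.2 h.2⟩

lemma stepb_inj (b b' : Bool) (s : ℕ × ℕ) (h : stepb b s = stepb b' s) : b = b' := by
  cases b <;> cases b' <;> first
    | rfl
    | (exfalso; have := congrArg Prod.fst h; simp [stepb] at this)

section analytic

variable {β β' r : ℝ}

lemma urnStep_up (s : ℕ × ℕ) :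
    urnStep β r s (s.1+1, s.2) = r * (s.1 : ℝ) ^ β / (r * (s.1 : ℝ) ^ β + (s.2 : ℝ) ^ β) := by
  simp [urnStep]

lemma urnStep_down (s : ℕ × ℕ) :
    urnStep β r s (s.1, s.2+1) = (s.2 : ℝ) ^ β / (r * (s.1 : ℝ) ^ β + (s.2 : ℝ) ^ β) := by
  have : ¬ ((s.1 : ℕ), s.2+1) = (s.1 + 1, s.2) := by
    intro h; exact absurd (congrArg Prod.fst h) (by simp)
  simp [urnStep, this]

lemma denom_pos (hr : 1 ≤ r) {a b : ℕ} (ha : 0 < a) (hb : 0 < b) :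
    0 < r * (a : ℝ) ^ β + (b : ℝ) ^ β := by
  have h1 : (0:ℝ) < (a:ℝ) ^ β := Real.rpow_pos_of_pos (by exact_mod_cast ha) _
  have h2 : (0:ℝ) < (b:ℝ) ^ β := Real.rpow_pos_of_pos (by exact_mod_cast hb) _
  nlinarith

lemma urnStep_nonneg (hr : 1 ≤ r) (x y : ℕ × ℕ) : 0 ≤ urnStep β r x y := by
  unfold urnStep
  have h1 : (0:ℝ) ≤ (x.1:ℝ) ^ β := Real.rpow_nonneg (Nat.cast_nonneg _) _
  have h2 : (0:ℝ) ≤ (x.2:ℝ) ^ β := Real.rpow_nonneg (Nat.cast_nonneg _) _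
  have hr0 : (0:ℝ) ≤ r := by linarith
  split_ifs <;> positivity

lemma urnStep_add (hr : 1 ≤ r) (s : ℕ × ℕ) (h1 : 0 < s.1) (h2 : 0 < s.2) :
    urnStep β r s (s.1+1, s.2) + urnStep β r s (s.1, s.2+1) = 1 := by
  rw [urnStep_up, urnStep_down, ← add_div, div_self (ne_of_gt (denom_pos hr h1 h2))]

lemma gfun_nonneg (hr : 1 ≤ r) (m : ℕ) (s : ℕ × ℕ) : 0 ≤ gfun β r m s := by
  induction m generalizing s with
  | zero => norm_num [gfun]
  | succ m ih =>
      unfold gfun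
      have hu := urnStep_nonneg (β := β) hr
      have h1 := mul_nonneg (hu s (s.1+1, s.2)) (ih (s.1+1, s.2))
      have h2 := mul_nonneg (hu s (s.1, s.2+1)) (ih (s.1, s.2+1))
      split_ifs <;> linarith

/-- the key ratio inequality -/
lemma ratio_key (hβ'0 : 0 ≤ β') (hββ' : β' ≤ β) {q q' p p' : ℕ}
    (h1 : 1 ≤ q) (h2 : q ≤ q') (h3 : q' < p') (h4 : p' ≤ p) :
    ((q:ℝ)/p) ^ β ≤ ((q':ℝ)/p') ^ β' := by
  have hq : (0:ℝ) < q := by exact_mod_cast h1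
  have hq' : (0:ℝ) < q' := by exact_mod_cast lt_of_lt_of_le h1 h2
  have hp'0 : (0:ℝ) < p' := by exact_mod_cast (lt_of_le_of_lt (Nat.zero_le _) h3)
  have hp0 : (0:ℝ) < p := lt_of_lt_of_le hp'0 (by exact_mod_cast h4)
  have hx0 : (0:ℝ) < (q:ℝ)/p := div_pos hq hp0
  have hqp : (q:ℕ) ≤ p := le_trans h2 (le_trans (le_of_lt h3) h4)
  have hx1 : (q:ℝ)/p ≤ 1 := by
    rw [div_le_one hp0]; exact_mod_cast hqp
  have step1 : ((q:ℝ)/p) ^ β ≤ ((q:ℝ)/p) ^ β' :=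
    Real.rpow_le_rpow_of_exponent_ge hx0 hx1 hββ'
  have hxy : (q:ℝ)/p ≤ (q':ℝ)/p' := by
    rw [div_le_div_iff₀ hp0 hp'0]
    have : (q:ℕ) * p' ≤ q' * p := Nat.mul_le_mul h2 h4
    exact_mod_cast this
  have step2 : ((q:ℝ)/p) ^ β' ≤ ((q':ℝ)/p') ^ β' :=
    Real.rpow_le_rpow (le_of_lt hx0) hxy hβ'0
  linarith

/-- monotonicity of the up-step probability. -/
lemma up_mono (hβ'0 : 0 ≤ β') (hββ' : β' ≤ β) (hr : 1 ≤ r) {a b a' b' : ℕ}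
    (h1 : 1 ≤ b) (h2 : b ≤ b') (h3 : b' < a') (h4 : a' ≤ a) :
    r * (a':ℝ) ^ β' / (r * (a':ℝ) ^ β' + (b':ℝ) ^ β')
      ≤ r * (a:ℝ) ^ β / (r * (a:ℝ) ^ β + (b:ℝ) ^ β) := by
  have ha : (0:ℝ) < a := by exact_mod_cast lt_of_le_of_lt (Nat.zero_le _) (lt_of_lt_of_le h3 h4)
  have ha' : (0:ℝ) < a' := by exact_mod_cast lt_of_le_of_lt (Nat.zero_le _) h3
  have hb : (0:ℝ) < b := by exact_mod_cast h1
  have hb' : (0:ℝ) < b' := by exact_mod_cast lt_of_lt_of_le h1 h2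
  have hr0 : (0:ℝ) < r := by linarith
  have key : ((b:ℝ)/a) ^ β ≤ ((b':ℝ)/a') ^ β' :=
    ratio_key hβ'0 hββ' h1 h2 h3 h4
  have e1 : ((b:ℝ)/a) ^ β = (b:ℝ)^β / (a:ℝ)^β := Real.div_rpow (le_of_lt hb) (le_of_lt ha) β
  have e2 : ((b':ℝ)/a') ^ β' = (b':ℝ)^β' / (a':ℝ)^β' := Real.div_rpow (le_of_lt hb') (le_of_lt ha') β'
  rw [e1, e2] at key
  have hA : (0:ℝ) < (a:ℝ)^β := Real.rpow_pos_of_pos ha _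
  have hA' : (0:ℝ) < (a':ℝ)^β' := Real.rpow_pos_of_pos ha' _
  have hB : (0:ℝ) < (b:ℝ)^β := Real.rpow_pos_of_pos hb _
  have hB' : (0:ℝ) < (b':ℝ)^β' := Real.rpow_pos_of_pos hb' _
  have cross : (b:ℝ)^β * (a':ℝ)^β' ≤ (b':ℝ)^β' * (a:ℝ)^β := by
    rw [div_le_div_iff₀ hA hA'] at key
    linarith
  rw [div_le_div_iff₀ (by nlinarith) (by nlinarith)]
  nlinarith [mul_le_mul_of_nonneg_left cross (le_of_lt hr0)]

lemma down_mono (hβ'0 : 0 ≤ β') (hββ' : β' ≤ β) (hr : 1 ≤ r) {a b a' b' : ℕ}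
    (h1 : 1 ≤ a) (h2 : a ≤ a') (h3 : a' < b') (h4 : b' ≤ b) :
    (b':ℝ) ^ β' / (r * (a':ℝ) ^ β' + (b':ℝ) ^ β')
      ≤ (b:ℝ) ^ β / (r * (a:ℝ) ^ β + (b:ℝ) ^ β) := by
  have hb : (0:ℝ) < b := by exact_mod_cast lt_of_le_of_lt (Nat.zero_le _) (lt_of_lt_of_le h3 h4)
  have hb' : (0:ℝ) < b' := by exact_mod_cast lt_of_le_of_lt (Nat.zero_le _) h3
  have ha : (0:ℝ) < a := by exact_mod_cast h1
  have ha' : (0:ℝ) < a' := by exact_mod_cast lt_of_lt_of_le h1 h2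
  have hr0 : (0:ℝ) < r := by linarith
  have key : ((a:ℝ)/b) ^ β ≤ ((a':ℝ)/b') ^ β' :=
    ratio_key hβ'0 hββ' h1 h2 h3 h4
  have e1 : ((a:ℝ)/b) ^ β = (a:ℝ)^β / (b:ℝ)^β := Real.div_rpow (le_of_lt ha) (le_of_lt hb) β
  have e2 : ((a':ℝ)/b') ^ β' = (a':ℝ)^β' / (b':ℝ)^β' := Real.div_rpow (le_of_lt ha') (le_of_lt hb') β'
  rw [e1, e2] at key
  have hA : (0:ℝ) < (a:ℝ)^β := Real.rpow_pos_of_pos ha _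
  have hA' : (0:ℝ) < (a':ℝ)^β' := Real.rpow_pos_of_pos ha' _
  have hB : (0:ℝ) < (b:ℝ)^β := Real.rpow_pos_of_pos hb _
  have hB' : (0:ℝ) < (b':ℝ)^β' := Real.rpow_pos_of_pos hb' _
  have cross : (a:ℝ)^β * (b':ℝ)^β' ≤ (a':ℝ)^β' * (b:ℝ)^β := by
    rw [div_le_div_iff₀ hB hB'] at key
    linarith
  rw [div_le_div_iff₀ (by nlinarith) (by nlinarith)]
  nlinarith [mul_le_mul_of_nonneg_left cross (le_of_lt hr0)]

lemma gfun_mono_pos (hβ0 : 0 ≤ β) (hr : 1 ≤ r) :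
    ∀ (k : ℕ) (β' : ℝ), 0 ≤ β' → β' ≤ β → ∀ a b a' b' : ℕ,
      1 ≤ b → b ≤ b' → b' < a' → a' ≤ a →
      gfun β' r k (a', b') ≤ gfun β r k (a, b) := by
  intro k
  induction k with
  | zero => intro β' _ _ a b a' b' _ _ _ _; exact le_refl 1
  | succ k ih =>
      intro β' hβ'0 hββ' a b a' b' h1 h2 h3 h4
      have hba : b < a := lt_of_lt_of_le (lt_of_le_of_lt h2 h3) h4
      have hne1 : ¬ (a + 1 = b) := by omega
      have hne1' : ¬ (a' + 1 = b') := by omega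
      -- notation
      set p : ℝ := urnStep β r (a, b) (a+1, b) with hp_def
      set p' : ℝ := urnStep β' r (a', b') (a'+1, b') with hp'_def
      set A : ℝ := gfun β r k (a+1, b) with hA_def
      set A' : ℝ := gfun β' r k (a'+1, b') with hA'_def
      set B : ℝ := if a = b + 1 then 0 else gfun β r k (a, b+1) with hB_def
      set B' : ℝ := if a' = b' + 1 then 0 else gfun β' r k (a', b'+1) with hB'_def
      have expand : gfun β r (k+1) (a, b) = p * A + (1 - p) * B := by
        show (if (a:ℕ) + 1 = b then _ else _) + _ = _
        rw [if_neg hne1]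
        have hq : urnStep β r (a, b) (a, b+1) = 1 - p := by
          have := urnStep_add (β := β) hr (a, b) (by omega) (by omega)
          simp only [hp_def]; linarith [this]
        by_cases hab : a = b + 1
        · rw [if_pos hab, hB_def, if_pos hab]; ring
        · rw [if_neg hab, hB_def, if_neg hab, hq]
      have expand' : gfun β' r (k+1) (a', b') = p' * A' + (1 - p') * B' := by
        show (if (a':ℕ) + 1 = b' then _ else _) + _ = _
        rw [if_neg hne1']
        have hq : urnStep β' r (a', b') (a', b'+1) = 1 - p' := by
          have := urnStep_add (β := β') hr (a', b') (by omega) (by omega)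
          simp only [hp'_def]; linarith [this]
        by_cases hab : a' = b' + 1
        · rw [if_pos hab, hB'_def, if_pos hab]; ring
        · rw [if_neg hab, hB'_def, if_neg hab, hq]
      rw [expand, expand']
      -- probabilities
      have hpp' : p' ≤ p := by
        rw [hp_def, hp'_def, urnStep_up, urnStep_up]
        exact up_mono hβ'0 hββ' hr h1 h2 h3 h4
      have hp'0 : 0 ≤ p' := urnStep_nonneg hr _ _
      have hp'1 : p' ≤ 1 := by
        have := urnStep_add (β := β') hr (a', b') (by omega : 0 < (a', b').1) (by omega : 0 < (a', b').2)
        have := urnStep_nonneg (β := β') hr (a', b') ((a', b').1, (a', b').2+1)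
        simp only [hp'_def]
        linarith
      have hp1 : p ≤ 1 := by
        have := urnStep_add (β := β) hr (a, b) (by omega : 0 < (a, b).1) (by omega : 0 < (a, b).2)
        have := urnStep_nonneg (β := β) hr (a, b) ((a, b).1, (a, b).2+1)
        simp only [hp_def]
        linarith
      -- value comparisons
      have hAA' : A' ≤ A := ih β' hβ'0 hββ' (a+1) b (a'+1) b' h1 h2 (by omega) (by omega)
      have hBnn : 0 ≤ B := by
        rw [hB_def]; split_ifs
        · exact le_refl 0
        · exact gfun_nonneg hr k _
      have hBA : B ≤ A := by
        rw [hB_def]; split_ifs with hab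
        · exact gfun_nonneg hr k _
        · exact ih β hβ0 (le_refl β) (a+1) b a (b+1) (by omega) (by omega) (by omega) (by omega)
      have hBB' : B' ≤ B := by
        rw [hB'_def]; split_ifs with hab
        · exact hBnn
        · have hab2 : ¬ (a = b + 1) := by omega
          rw [hB_def, if_neg hab2]
          exact ih β' hβ'0 hββ' a (b+1) a' (b'+1) (by omega) (by omega) (by omega) (by omega)
      nlinarith [mul_nonneg (sub_nonneg.2 hpp') (sub_nonneg.2 hBA),
                 mul_nonneg hp'0 (sub_nonneg.2 hAA'),
                 mul_nonneg (sub_nonneg.2 hp'1) (sub_nonneg.2 hBB')]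

lemma gfun_mono_neg (hβ0 : 0 ≤ β) (hr : 1 ≤ r) :
    ∀ (k : ℕ) (β' : ℝ), 0 ≤ β' → β' ≤ β → ∀ a b a' b' : ℕ,
      1 ≤ a → a ≤ a' → a' < b' → b' ≤ b →
      gfun β' r k (a', b') ≤ gfun β r k (a, b) := by
  intro k
  induction k with
  | zero => intro β' _ _ a b a' b' _ _ _ _; exact le_refl 1
  | succ k ih =>
      intro β' hβ'0 hββ' a b a' b' h1 h2 h3 h4
      have hab : a < b := lt_of_lt_of_le (lt_of_le_of_lt h2 h3) h4
      have hne1 : ¬ (a = b + 1) := by omega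
      have hne1' : ¬ (a' = b' + 1) := by omega
      set p : ℝ := urnStep β r (a, b) (a, b+1) with hp_def
      set p' : ℝ := urnStep β' r (a', b') (a', b'+1) with hp'_def
      set A : ℝ := gfun β r k (a, b+1) with hA_def
      set A' : ℝ := gfun β' r k (a', b'+1) with hA'_def
      set B : ℝ := if a + 1 = b then 0 else gfun β r k (a+1, b) with hB_def
      set B' : ℝ := if a' + 1 = b' then 0 else gfun β' r k (a'+1, b') with hB'_def
      have expand : gfun β r (k+1) (a, b) = p * A + (1 - p) * B := by
        show (if (a:ℕ) + 1 = b then _ else _) + (if (a:ℕ) = b + 1 then _ else _) = _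
        rw [if_neg hne1]
        have hq : urnStep β r (a, b) (a+1, b) = 1 - p := by
          have := urnStep_add (β := β) hr (a, b) (by omega) (by omega)
          simp only [hp_def]; linarith [this]
        by_cases hab2 : a + 1 = b
        · rw [if_pos hab2, hB_def, if_pos hab2]; ring
        · rw [if_neg hab2, hB_def, if_neg hab2, hq]; ring
      have expand' : gfun β' r (k+1) (a', b') = p' * A' + (1 - p') * B' := by
        show (if (a':ℕ) + 1 = b' then _ else _) + (if (a':ℕ) = b' + 1 then _ else _) = _
        rw [if_neg hne1']
        have hq : urnStep β' r (a', b') (a'+1, b') = 1 - p' := by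
          have := urnStep_add (β := β') hr (a', b') (by omega) (by omega)
          simp only [hp'_def]; linarith [this]
        by_cases hab2 : a' + 1 = b'
        · rw [if_pos hab2, hB'_def, if_pos hab2]; ring
        · rw [if_neg hab2, hB'_def, if_neg hab2, hq]; ring
      rw [expand, expand']
      have hpp' : p' ≤ p := by
        rw [hp_def, hp'_def, urnStep_down, urnStep_down]
        exact down_mono hβ'0 hββ' hr h1 h2 h3 h4
      have hp'0 : 0 ≤ p' := urnStep_nonneg hr _ _
      have hp'1 : p' ≤ 1 := by
        have := urnStep_add (β := β') hr (a', b') (by omega : 0 < (a', b').1) (by omega : 0 < (a', b').2)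
        have := urnStep_nonneg (β := β') hr (a', b') ((a', b').1 + 1, (a', b').2)
        simp only [hp'_def]
        linarith
      have hp1 : p ≤ 1 := by
        have := urnStep_add (β := β) hr (a, b) (by omega : 0 < (a, b).1) (by omega : 0 < (a, b).2)
        have := urnStep_nonneg (β := β) hr (a, b) ((a, b).1 + 1, (a, b).2)
        simp only [hp_def]
        linarith
      have hAA' : A' ≤ A := ih β' hβ'0 hββ' a (b+1) a' (b'+1) h1 h2 (by omega) (by omega)
      have hBnn : 0 ≤ B := by
        rw [hB_def]; split_ifs
        · exact le_refl 0
        · exact gfun_nonneg hr k _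
      have hBA : B ≤ A := by
        rw [hB_def]; split_ifs with hab2
        · exact gfun_nonneg hr k _
        · exact ih β hβ0 (le_refl β) a (b+1) (a+1) b (by omega) (by omega) (by omega) (by omega)
      have hBB' : B' ≤ B := by
        rw [hB'_def]; split_ifs with hab2
        · exact hBnn
        · have hab3 : ¬ (a + 1 = b) := by omega
          rw [hB_def, if_neg hab3]
          exact ih β' hβ'0 hββ' (a+1) b (a'+1) b' (by omega) (by omega) (by omega) (by omega)
      nlinarith [mul_nonneg (sub_nonneg.2 hpp') (sub_nonneg.2 hBA),
                 mul_nonneg hp'0 (sub_nonneg.2 hAA'),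
                 mul_nonneg (sub_nonneg.2 hp'1) (sub_nonneg.2 hBB')]

/-- comparison from a tied start. -/
lemma gfun_mono_tie (hβ'0 : 0 ≤ β') (hββ' : β' ≤ β) (hr : 1 ≤ r) (x₀ : ℕ) (hx₀ : 0 < x₀)
    (m : ℕ) : gfun β' r m (x₀, x₀) ≤ gfun β r m (x₀, x₀) := by
  have hβ0 : 0 ≤ β := le_trans hβ'0 hββ'
  cases m with
  | zero => exact le_refl 1
  | succ k =>
      have hne1 : ¬ ((x₀:ℕ) + 1 = x₀) := by omega
      have hne2 : ¬ ((x₀:ℕ) = x₀ + 1) := by omega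
      have hup : ∀ γ : ℝ, urnStep γ r (x₀, x₀) (x₀+1, x₀) = r / (r + 1) := by
        intro γ
        rw [urnStep_up]
        have hx : (0:ℝ) < (x₀:ℝ) ^ γ := Real.rpow_pos_of_pos (by exact_mod_cast hx₀) _
        field_simp
      have hdown : ∀ γ : ℝ, urnStep γ r (x₀, x₀) (x₀, x₀+1) = 1 / (r + 1) := by
        intro γ
        rw [urnStep_down]
        have hx : (0:ℝ) < (x₀:ℝ) ^ γ := Real.rpow_pos_of_pos (by exact_mod_cast hx₀) _
        field_simp
      have e1 : gfun β r (k+1) (x₀, x₀)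
          = r/(r+1) * gfun β r k (x₀+1, x₀) + 1/(r+1) * gfun β r k (x₀, x₀+1) := by
        show (if (x₀:ℕ) + 1 = x₀ then _ else _) + (if (x₀:ℕ) = x₀ + 1 then _ else _) = _
        rw [if_neg hne1, if_neg hne2, hup β, hdown β]
      have e2 : gfun β' r (k+1) (x₀, x₀)
          = r/(r+1) * gfun β' r k (x₀+1, x₀) + 1/(r+1) * gfun β' r k (x₀, x₀+1) := by
        show (if (x₀:ℕ) + 1 = x₀ then _ else _) + (if (x₀:ℕ) = x₀ + 1 then _ else _) = _
        rw [if_neg hne1, if_neg hne2, hup β', hdown β']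
      rw [e1, e2]
      have c1 : gfun β' r k (x₀+1, x₀) ≤ gfun β r k (x₀+1, x₀) :=
        gfun_mono_pos hβ0 hr k β' hβ'0 hββ' (x₀+1) x₀ (x₀+1) x₀ hx₀ (le_refl _) (by omega) (le_refl _)
      have c2 : gfun β' r k (x₀, x₀+1) ≤ gfun β r k (x₀, x₀+1) :=
        gfun_mono_neg hβ0 hr k β' hβ'0 hββ' x₀ (x₀+1) x₀ (x₀+1) hx₀ (le_refl _) (by omega) (le_refl _)
      have hr0 : (0:ℝ) < r := by linarith
      have h1 : (0:ℝ) < r + 1 := by linarith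
      have := div_nonneg (le_of_lt hr0) (le_of_lt h1)
      have := div_nonneg (by norm_num : (0:ℝ) ≤ 1) (le_of_lt h1)
      nlinarith

lemma urnStep_zero_up (s : ℕ × ℕ) : urnStep 0 r s (s.1+1, s.2) = r/(r+1) := by
  rw [urnStep_up, Real.rpow_zero, Real.rpow_zero, mul_one]

lemma urnStep_zero_down (s : ℕ × ℕ) : urnStep 0 r s (s.1, s.2+1) = 1/(r+1) := by
  rw [urnStep_down, Real.rpow_zero, Real.rpow_zero, mul_one]

lemma gzero_lb (hr : 1 ≤ r) :
    ∀ (k f b : ℕ), 1 - (1/r)^(f+1) ≤ gfun 0 r k (b+1+f, b) := by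
  have hr0 : (0:ℝ) < r := by linarith
  have hr1 : (0:ℝ) < r + 1 := by linarith
  have h0 : r ≠ 0 := ne_of_gt hr0
  have h1 : r + 1 ≠ 0 := ne_of_gt hr1
  have hp0 : (0:ℝ) ≤ r/(r+1) := by positivity
  have hq0 : (0:ℝ) ≤ 1/(r+1) := by positivity
  intro k
  induction k with
  | zero =>
      intro f b
      have : (0:ℝ) ≤ (1/r)^(f+1) := by positivity
      show 1 - (1/r)^(f+1) ≤ 1
      linarith
  | succ k ih =>
      intro f b
      have hne1 : ¬ (b + 1 + f + 1 = b) := by omega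
      have e0 : gfun 0 r (k+1) (b+1+f, b)
          = r/(r+1) * gfun 0 r k (b+1+f+1, b)
            + (if b+1+f = b+1 then 0 else 1/(r+1) * gfun 0 r k (b+1+f, b+1)) := by
        show (if (b+1+f : ℕ) + 1 = b then _ else _) + (if (b+1+f : ℕ) = b + 1 then _ else _) = _
        rw [if_neg hne1, urnStep_zero_up (s := (b+1+f, b)), urnStep_zero_down (s := (b+1+f, b))]
      rw [e0]
      by_cases hf : f = 0
      · subst hf
        rw [if_pos (by omega)]
        have hg1 : 1 - (1/r)^(1+1) ≤ gfun 0 r k (b+1+0+1, b) := by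
          have := ih 1 b
          have hre : b+1+1 = b+1+0+1 := by omega
          rwa [hre] at this
        have hmul := mul_le_mul_of_nonneg_left hg1 hp0
        have hkey : 1 - (1/r)^(0+1) = r/(r+1) * (1 - (1/r)^(1+1)) := by
          field_simp
          ring_nf
          field_simp
          ring
        rw [hkey]
        linarith
      · obtain ⟨f', rfl⟩ : ∃ f', f = f' + 1 := ⟨f - 1, by omega⟩
        rw [if_neg (by omega)]
        have hg1 : 1 - (1/r)^(f'+2+1) ≤ gfun 0 r k (b+1+(f'+1)+1, b) := by
          have := ih (f'+2) b
          have hre : b+1+(f'+2) = b+1+(f'+1)+1 := by omega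
          rwa [hre] at this
        have hg2 : 1 - (1/r)^(f'+1) ≤ gfun 0 r k (b+1+(f'+1), b+1) := by
          have := ih f' (b+1)
          have hre : b+1+1+f' = b+1+(f'+1) := by omega
          rwa [hre] at this
        have hm1 := mul_le_mul_of_nonneg_left hg1 hp0
        have hm2 := mul_le_mul_of_nonneg_left hg2 hq0
        have hkey : r/(r+1) * (1 - (1/r)^(f'+2+1)) + 1/(r+1) * (1 - (1/r)^(f'+1))
            = 1 - (1/r)^(f'+1+1) := by
          have e3 : (1/r:ℝ)^(f'+2+1) = (1/r)^(f'+1) * ((1/r)*(1/r)) := by ring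
          have e2 : (1/r:ℝ)^(f'+1+1) = (1/r)^(f'+1) * (1/r) := by ring
          rw [e3, e2]
          field_simp
          ring
        linarith

/-- from a tied start, the probability of a tie within `m` further steps
is at most `2/(r+1)`. -/
lemma one_sub_gfun_le (hβ0 : 0 ≤ β) (hr : 1 ≤ r) (x₀ : ℕ) (hx₀ : 0 < x₀) (m : ℕ) :
    1 - gfun β r m (x₀, x₀) ≤ 2/(r+1) := by
  have hr0 : (0:ℝ) < r := by linarith
  have hr1 : (0:ℝ) < r + 1 := by linarith
  have hcomp := gfun_mono_tie (β := β) (β' := 0) (le_refl 0) hβ0 hr x₀ hx₀ m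
  suffices h : 1 - gfun 0 r m (x₀, x₀) ≤ 2/(r+1) by linarith
  cases m with
  | zero =>
      have : (0:ℝ) ≤ 2/(r+1) := by positivity
      show (1:ℝ) - 1 ≤ 2/(r+1)
      linarith
  | succ k =>
      have e0 : gfun 0 r (k+1) (x₀, x₀)
          = r/(r+1) * gfun 0 r k (x₀+1, x₀) + 1/(r+1) * gfun 0 r k (x₀, x₀+1) := by
        show (if (x₀:ℕ) + 1 = x₀ then _ else _) + (if (x₀:ℕ) = x₀ + 1 then _ else _) = _
        rw [if_neg (by omega), if_neg (by omega), urnStep_zero_up (s := (x₀, x₀)),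
          urnStep_zero_down (s := (x₀, x₀))]
      rw [e0]
      have hg1 : 1 - (1/r)^(0+1) ≤ gfun 0 r k (x₀+1, x₀) := by
        have := gzero_lb hr k 0 x₀
        exact this
      have hg2 : (0:ℝ) ≤ gfun 0 r k (x₀, x₀+1) := gfun_nonneg hr k _
      have hp0 : (0:ℝ) ≤ r/(r+1) := by positivity
      have hq0 : (0:ℝ) ≤ 1/(r+1) := by positivity
      have hm1 := mul_le_mul_of_nonneg_left hg1 hp0
      have hm2 := mul_le_mul_of_nonneg_left hg2 hq0
      have hkey : r/(r+1) * (1 - (1/r)^(0+1)) = 1 - 2/(r+1) := by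
        field_simp
        ring_nf
        field_simp
        ring
      linarith

end analytic

section combinatorial

variable {β r : ℝ}

lemma extc_cons_zero (m : ℕ) (b : Bool) (c : Fin m → Bool) :
    extc (m+1) (Fin.cons b c) 0 = b := by
  simp only [extc]
  rw [dif_pos (Nat.succ_pos m)]
  have h0 : (⟨0, Nat.succ_pos m⟩ : Fin (m+1)) = 0 := rfl
  rw [h0, Fin.cons_zero]

lemma extc_cons_shift (m : ℕ) (b : Bool) (c : Fin m → Bool) :
    (fun i => extc (m+1) (Fin.cons b c) (i+1)) = extc m c := by
  funext i
  simp only [extc]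
  by_cases h : i < m
  · rw [dif_pos (show i+1 < m+1 by omega), dif_pos h]
    have hs : (⟨i+1, by omega⟩ : Fin (m+1)) = Fin.succ ⟨i, h⟩ := rfl
    rw [hs, Fin.cons_succ]
  · rw [dif_neg (show ¬ (i+1 < m+1) by omega), dif_neg h]

lemma pathFrom_shift (n : ℕ) (c : ℕ → Bool) (s : ℕ × ℕ) :
    pathFrom (n+1) c s = pathFrom n (fun i => c (i+1)) (stepb (c 0) s) := rfl

lemma wt_succ (m : ℕ) (c : ℕ → Bool) (s : ℕ × ℕ) :
    wt β r (m+1) c s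
      = urnStep β r s (stepb (c 0) s) * wt β r m (fun i => c (i+1)) (stepb (c 0) s) := by
  unfold wt
  rw [Finset.prod_range_succ']
  rw [mul_comm]
  rfl

lemma noTie_succ (m : ℕ) (c : ℕ → Bool) (s : ℕ × ℕ) :
    noTie (m+1) c s
      ↔ ((stepb (c 0) s).1 ≠ (stepb (c 0) s).2
          ∧ noTie m (fun i => c (i+1)) (stepb (c 0) s)) := by
  unfold noTie
  constructor
  · intro h
    refine ⟨h 1 (Finset.mem_Icc.2 (by omega)), fun u hu => ?_⟩
    have hu' := Finset.mem_Icc.1 hu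
    have := h (u+1) (Finset.mem_Icc.2 (by omega))
    exact this
  · rintro ⟨h0, h⟩ u hu
    have hu' := Finset.mem_Icc.1 hu
    rcases u with _ | v
    · omega
    rcases Nat.eq_zero_or_pos v with rfl | hv
    · exact h0
    · exact h v (Finset.mem_Icc.2 (by omega))

lemma sum_cons (m : ℕ) (F : (Fin (m+1) → Bool) → ℝ) :
    ∑ c : Fin (m+1) → Bool, F c = ∑ b : Bool, ∑ c : Fin m → Bool, F (Fin.cons b c) := by
  rw [← (Fin.consEquiv (fun _ : Fin (m+1) => Bool)).sum_comp]
  rw [Fintype.sum_prod_type]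
  rfl

lemma stepb_coords (b : Bool) (s : ℕ × ℕ) (h1 : 0 < s.1) (h2 : 0 < s.2) :
    0 < (stepb b s).1 ∧ 0 < (stepb b s).2 := by
  cases b <;> simp [stepb] <;> omega

lemma urnStep_stepb_add (hr : 1 ≤ r) (s : ℕ × ℕ) (h1 : 0 < s.1) (h2 : 0 < s.2) :
    urnStep β r s (stepb true s) + urnStep β r s (stepb false s) = 1 :=
  urnStep_add hr s h1 h2

lemma pathSum_eq (hr : 1 ≤ r) :
    ∀ (m : ℕ) (s : ℕ × ℕ), 0 < s.1 → 0 < s.2 →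
      (∑ c : Fin m → Bool,
          if noTie m (extc m c) s then wt β r m (extc m c) s else 0)
        = gfun β r m s := by
  intro m
  induction m with
  | zero =>
      intro s _ _
      rw [Fintype.sum_eq_single (fun i => (default : Bool)) (fun c hc => absurd (funext fun i => Fin.elim0 i) hc)]
      have hnt : noTie 0 (extc 0 (fun _ => default)) s := by
        intro t ht
        have := Finset.mem_Icc.1 ht
        omega
      rw [if_pos hnt]
      show wt β r 0 _ s = 1
      unfold wt
      exact Finset.prod_range_zero _
  | succ m ih =>
      intro s hs1 hs2
      rw [sum_cons]
      have hterm : ∀ (b : Bool) (c : Fin m → Bool),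
          (if noTie (m+1) (extc (m+1) (Fin.cons b c)) s
            then wt β r (m+1) (extc (m+1) (Fin.cons b c)) s else 0)
          = (if (stepb b s).1 = (stepb b s).2 then 0
              else urnStep β r s (stepb b s) *
                (if noTie m (extc m c) (stepb b s)
                  then wt β r m (extc m c) (stepb b s) else 0)) := by
        intro b c
        have hz : extc (m+1) (Fin.cons b c) 0 = b := extc_cons_zero m b c
        have hnt : noTie (m+1) (extc (m+1) (Fin.cons b c)) s
            ↔ ((stepb b s).1 ≠ (stepb b s).2 ∧ noTie m (extc m c) (stepb b s)) := by
          rw [noTie_succ]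
          rw [extc_cons_shift, hz]
        have hwt : wt β r (m+1) (extc (m+1) (Fin.cons b c)) s
            = urnStep β r s (stepb b s) * wt β r m (extc m c) (stepb b s) := by
          rw [wt_succ, extc_cons_shift, hz]
        by_cases htie : (stepb b s).1 = (stepb b s).2
        · rw [if_pos htie]
          rw [if_neg (by rw [hnt]; tauto)]
        · rw [if_neg htie]
          by_cases hnt2 : noTie m (extc m c) (stepb b s)
          · rw [if_pos (hnt.2 ⟨htie, hnt2⟩), if_pos hnt2, hwt]
          · rw [if_neg (by rw [hnt]; tauto), if_neg hnt2, mul_zero]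
      have hinner : ∀ b : Bool,
          (∑ c : Fin m → Bool,
            if noTie (m+1) (extc (m+1) (Fin.cons b c)) s
              then wt β r (m+1) (extc (m+1) (Fin.cons b c)) s else 0)
          = (if (stepb b s).1 = (stepb b s).2 then 0
              else urnStep β r s (stepb b s) * gfun β r m (stepb b s)) := by
        intro b
        rw [Finset.sum_congr rfl (fun c _ => hterm b c)]
        by_cases htie : (stepb b s).1 = (stepb b s).2
        · rw [if_pos htie]
          rw [Finset.sum_congr rfl (fun c _ => if_pos htie)]
          exact Finset.sum_const_zero
        · rw [if_neg htie]
          rw [Finset.sum_congr rfl (fun c _ => if_neg htie)]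
          rw [← Finset.mul_sum]
          have hc := stepb_coords b s hs1 hs2
          rw [ih (stepb b s) hc.1 hc.2]
      rw [Finset.sum_congr rfl (fun b _ => hinner b)]
      rw [Fintype.sum_bool]
      rfl

lemma sum_wt (hr : 1 ≤ r) :
    ∀ (m : ℕ) (s : ℕ × ℕ), 0 < s.1 → 0 < s.2 →
      (∑ c : Fin m → Bool, wt β r m (extc m c) s) = 1 := by
  intro m
  induction m with
  | zero =>
      intro s _ _
      rw [Fintype.sum_eq_single (fun i => (default : Bool)) (fun c hc => absurd (funext fun i => Fin.elim0 i) hc)]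
      exact Finset.prod_range_zero _
  | succ m ih =>
      intro s hs1 hs2
      rw [sum_cons]
      have hterm : ∀ (b : Bool) (c : Fin m → Bool),
          wt β r (m+1) (extc (m+1) (Fin.cons b c)) s
            = urnStep β r s (stepb b s) * wt β r m (extc m c) (stepb b s) := by
        intro b c
        rw [wt_succ, extc_cons_shift, extc_cons_zero]
      have hinner : ∀ b : Bool,
          (∑ c : Fin m → Bool, wt β r (m+1) (extc (m+1) (Fin.cons b c)) s)
            = urnStep β r s (stepb b s) := by
        intro b
        rw [Finset.sum_congr rfl (fun c _ => hterm b c), ← Finset.mul_sum]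
        have hc := stepb_coords b s hs1 hs2
        rw [ih (stepb b s) hc.1 hc.2, mul_one]
      rw [Finset.sum_congr rfl (fun b _ => hinner b), Fintype.sum_bool]
      exact urnStep_stepb_add hr s hs1 hs2

lemma wt_nonneg (hr : 1 ≤ r) (m : ℕ) (c : ℕ → Bool) (s : ℕ × ℕ) :
    0 ≤ wt β r m c s :=
  Finset.prod_nonneg fun t _ => urnStep_nonneg hr _ _

lemma extc_inj (m : ℕ) (c c' : Fin m → Bool) (s : ℕ × ℕ)
    (h : ∀ t ≤ m, pathFrom t (extc m c) s = pathFrom t (extc m c') s) : c = c' := by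
  funext i
  have hi : (i : ℕ) < m := i.isLt
  have h1 := h i (le_of_lt hi)
  have h2 := h (i+1) (by omega)
  rw [pathFrom_succ, pathFrom_succ, h1] at h2
  have hb := stepb_inj _ _ _ h2
  have e1 : extc m c i = c i := by
    show (if h' : (i:ℕ) < m then c ⟨i, h'⟩ else false) = c i
    rw [dif_pos hi]
  have e2 : extc m c' i = c' i := by
    show (if h' : (i:ℕ) < m then c' ⟨i, h'⟩ else false) = c' i
    rw [dif_pos hi]
  rw [e1, e2] at hb
  exact hb

end combinatorial

section measure

variable {β r : ℝ}

/-- the cylinder set of paths agreeing with the canonical path up to time `m`. -/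
def cyl (x₀ : ℕ) (m : ℕ) (c : Fin m → Bool) : Set (ℕ → ℕ × ℕ) :=
  {ω | ∀ t ≤ m, ω t = pathFrom t (extc m c) (x₀, x₀)}

/-- the event that the process starts at `(x₀,x₀)`. -/
def startSet (x₀ : ℕ) : Set (ℕ → ℕ × ℕ) := {ω | ω 0 = (x₀, x₀)}

/-- the event of no tie at any time in `[1,m]`. -/
def ntSet (m : ℕ) : Set (ℕ → ℕ × ℕ) := {ω | ∀ s, 1 ≤ s → s ≤ m → (ω s).1 ≠ (ω s).2}

lemma measurable_eval_eq (t : ℕ) (p : ℕ × ℕ) :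
    MeasurableSet {ω : ℕ → ℕ × ℕ | ω t = p} := by
  have : {ω : ℕ → ℕ × ℕ | ω t = p} = (fun ω : ℕ → ℕ × ℕ => ω t) ⁻¹' {p} := rfl
  rw [this]
  exact (measurable_pi_apply t) (measurableSet_singleton p)

lemma measurable_cyl (x₀ m : ℕ) (c : Fin m → Bool) : MeasurableSet (cyl x₀ m c) := by
  have : cyl x₀ m c = ⋂ (t : ℕ) (_ : t ≤ m), {ω : ℕ → ℕ × ℕ | ω t = pathFrom t (extc m c) (x₀, x₀)} := by
    ext ω; simp [cyl, Set.mem_iInter]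
  rw [this]
  exact MeasurableSet.iInter fun t => MeasurableSet.iInter fun _ => measurable_eval_eq _ _

lemma measurable_start (x₀ : ℕ) : MeasurableSet (startSet x₀) := measurable_eval_eq 0 _

lemma measurable_tie_at (s : ℕ) : MeasurableSet {ω : ℕ → ℕ × ℕ | (ω s).1 = (ω s).2} := by
  have : {ω : ℕ → ℕ × ℕ | (ω s).1 = (ω s).2}
      = (fun ω : ℕ → ℕ × ℕ => ω s) ⁻¹' {p : ℕ × ℕ | p.1 = p.2} := rfl
  rw [this]
  exact (measurable_pi_apply s) ((Set.to_countable _).measurableSet)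

lemma measurable_nt (m : ℕ) : MeasurableSet (ntSet m) := by
  have : ntSet m = ⋂ (s : ℕ) (_ : 1 ≤ s) (_ : s ≤ m), {ω : ℕ → ℕ × ℕ | (ω s).1 = (ω s).2}ᶜ := by
    ext ω; simp [ntSet, Set.mem_iInter]
  rw [this]
  exact MeasurableSet.iInter fun s => MeasurableSet.iInter fun _ =>
    MeasurableSet.iInter fun _ => (measurable_tie_at s).compl

variable {μ : Measure (ℕ → ℕ × ℕ)} {x₀ : ℕ}

lemma measure_cyl (hμ : IsUrnProcess μ β r (x₀, x₀)) (m : ℕ) (c : Fin m → Bool) :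
    μ (cyl x₀ m c) = ENNReal.ofReal (wt β r m (extc m c) (x₀, x₀)) := by
  haveI := hμ.1
  have h := hμ.2 m (fun t => pathFrom t (extc m c) (x₀, x₀)) rfl
  have : μ (cyl x₀ m c) ≠ ⊤ := measure_ne_top μ _
  rw [← ENNReal.ofReal_toReal this]
  exact congrArg ENNReal.ofReal h

lemma measure_start (hμ : IsUrnProcess μ β r (x₀, x₀)) : μ (startSet x₀) = 1 := by
  haveI := hμ.1
  have h := hμ.2 0 (fun _ => (x₀, x₀)) rfl
  have hset : {ω : ℕ → ℕ × ℕ | ∀ t ≤ 0, ω t = (x₀, x₀)} = startSet x₀ := by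
    ext ω
    simp [startSet, Nat.le_zero]
  rw [hset, Finset.prod_range_zero] at h
  have hne : μ (startSet x₀) ≠ ⊤ := measure_ne_top μ _
  rw [← ENNReal.ofReal_toReal hne, h]
  exact ENNReal.ofReal_one

lemma cyl_disjoint (x₀ m : ℕ) :
    (↑(Finset.univ : Finset (Fin m → Bool)) : Set (Fin m → Bool)).PairwiseDisjoint (cyl x₀ m) := by
  intro c _ c' _ hne
  rw [Function.onFun, Set.disjoint_left]
  intro ω h1 h2
  apply hne
  apply extc_inj m c c' (x₀, x₀)
  intro t ht
  rw [← h1 t ht, ← h2 t ht]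

lemma cyl_subset_start (x₀ m : ℕ) (c : Fin m → Bool) : cyl x₀ m c ⊆ startSet x₀ :=
  fun ω h => h 0 (Nat.zero_le m)

lemma measure_union_cyl (hr : 1 ≤ r) (hx₀ : 0 < x₀) (hμ : IsUrnProcess μ β r (x₀, x₀)) (m : ℕ) :
    μ (⋃ c ∈ (Finset.univ : Finset (Fin m → Bool)), cyl x₀ m c) = 1 := by
  rw [measure_biUnion_finset (cyl_disjoint x₀ m) (fun c _ => measurable_cyl x₀ m c)]
  have : ∀ c ∈ (Finset.univ : Finset (Fin m → Bool)),
      μ (cyl x₀ m c) = ENNReal.ofReal (wt β r m (extc m c) (x₀, x₀)) :=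
    fun c _ => measure_cyl hμ m c
  rw [Finset.sum_congr rfl this]
  rw [← ENNReal.ofReal_sum_of_nonneg (fun c _ => wt_nonneg hr m _ _)]
  rw [sum_wt hr m (x₀, x₀) hx₀ hx₀]
  exact ENNReal.ofReal_one

lemma nt_inter_cyl (x₀ m : ℕ) (c : Fin m → Bool) :
    ntSet m ∩ cyl x₀ m c
      = if noTie m (extc m c) (x₀, x₀) then cyl x₀ m c else ∅ := by
  by_cases h : noTie m (extc m c) (x₀, x₀)
  · rw [if_pos h]
    apply Set.eq_of_subset_of_subset (Set.inter_subset_right)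
    intro ω hω
    refine ⟨fun s hs1 hsm => ?_, hω⟩
    rw [hω s hsm]
    exact h s (Finset.mem_Icc.2 ⟨hs1, hsm⟩)
  · rw [if_neg h]
    rw [Set.eq_empty_iff_forall_notMem]
    rintro ω ⟨hnt, hcyl⟩
    apply h
    intro s hs
    have hs' := Finset.mem_Icc.1 hs
    rw [← hcyl s hs'.2]
    exact hnt s hs'.1 hs'.2

/-- key identity : the measure of "no tie in `[1,m]` and start at `(x₀,x₀)`". -/
lemma measure_nt_inter_start (hr : 1 ≤ r) (hx₀ : 0 < x₀)
    (hμ : IsUrnProcess μ β r (x₀, x₀)) (m : ℕ) :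
    μ (ntSet m ∩ startSet x₀) = ENNReal.ofReal (gfun β r m (x₀, x₀)) := by
  haveI := hμ.1
  set U := ⋃ c ∈ (Finset.univ : Finset (Fin m → Bool)), cyl x₀ m c with hU_def
  have hUmeas : MeasurableSet U :=
    Finset.measurableSet_biUnion _ (fun c _ => measurable_cyl x₀ m c)
  have hUsub : U ⊆ startSet x₀ := by
    rw [hU_def]
    apply Set.iUnion₂_subset
    exact fun c _ => cyl_subset_start x₀ m c
  have hU1 : μ U = 1 := measure_union_cyl hr hx₀ hμ m
  have hdiff : μ (startSet x₀ \ U) = 0 := by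
    rw [measure_diff hUsub hUmeas.nullMeasurableSet (by rw [hU1]; exact ENNReal.one_ne_top)]
    rw [hU1, measure_start hμ]
    simp
  have step1 : μ (ntSet m ∩ startSet x₀) = μ (ntSet m ∩ U) := by
    apply le_antisymm
    · calc μ (ntSet m ∩ startSet x₀)
          ≤ μ ((ntSet m ∩ U) ∪ (startSet x₀ \ U)) := by
            apply measure_mono
            intro ω ⟨h1, h2⟩
            by_cases hu : ω ∈ U
            · exact Or.inl ⟨h1, hu⟩
            · exact Or.inr ⟨h2, hu⟩
        _ ≤ μ (ntSet m ∩ U) + μ (startSet x₀ \ U) := measure_union_le _ _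
        _ = μ (ntSet m ∩ U) := by rw [hdiff, add_zero]
    · exact measure_mono (Set.inter_subset_inter_right _ hUsub)
  rw [step1, hU_def, Set.inter_iUnion₂]
  rw [measure_biUnion_finset
    (fun c hc c' hc' hne => Disjoint.mono Set.inter_subset_right Set.inter_subset_right
      (cyl_disjoint x₀ m hc hc' hne))
    (fun c _ => (measurable_nt m).inter (measurable_cyl x₀ m c))]
  have hterm : ∀ c ∈ (Finset.univ : Finset (Fin m → Bool)),
      μ (ntSet m ∩ cyl x₀ m c)
        = ENNReal.ofReal (if noTie m (extc m c) (x₀, x₀)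
            then wt β r m (extc m c) (x₀, x₀) else 0) := by
    intro c _
    rw [nt_inter_cyl]
    by_cases h : noTie m (extc m c) (x₀, x₀)
    · rw [if_pos h, if_pos h, measure_cyl hμ m c]
    · rw [if_neg h, if_neg h, measure_empty, ENNReal.ofReal_zero]
  rw [Finset.sum_congr rfl hterm]
  rw [← ENNReal.ofReal_sum_of_nonneg (fun c _ => by
    by_cases h : noTie m (extc m c) (x₀, x₀)
    · rw [if_pos h]; exact wt_nonneg hr m _ _
    · rw [if_neg h])]
  congr 1
  exact pathSum_eq hr m (x₀, x₀) hx₀ hx₀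

/-- measures are unchanged by intersecting with the a.s. start event. -/
lemma measure_inter_start (hμ : IsUrnProcess μ β r (x₀, x₀)) (E : Set (ℕ → ℕ × ℕ)) :
    μ E = μ (E ∩ startSet x₀) := by
  haveI := hμ.1
  have hGc : μ (startSet x₀)ᶜ = 0 := by
    rw [measure_compl (measurable_start x₀) (measure_ne_top μ _), measure_start hμ]
    simp
  apply le_antisymm
  · calc μ E = μ ((E ∩ startSet x₀) ∪ (E ∩ (startSet x₀)ᶜ)) := by
          rw [Set.inter_union_compl]
      _ ≤ μ (E ∩ startSet x₀) + μ (E ∩ (startSet x₀)ᶜ) := measure_union_le _ _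
      _ ≤ μ (E ∩ startSet x₀) + μ (startSet x₀)ᶜ :=
          add_le_add (le_refl _) (measure_mono Set.inter_subset_right)
      _ = μ (E ∩ startSet x₀) := by rw [hGc, add_zero]
  · exact measure_mono Set.inter_subset_left

end measure

section tietime

lemma numTies_zero (ω : ℕ → ℕ × ℕ) (h0 : (ω 0).1 = (ω 0).2) : numTiesUpTo ω 0 = 1 := by
  unfold numTiesUpTo
  have : (Finset.range 1).filter (fun j => (ω j).1 = (ω j).2) = {0} := by
    ext j
    simp only [Finset.mem_filter, Finset.mem_range, Finset.mem_singleton]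
    constructor
    · rintro ⟨hj, _⟩; omega
    · rintro rfl; exact ⟨by omega, h0⟩
  rw [this, Finset.card_singleton]

lemma tieTime_iff (ω : ℕ → ℕ × ℕ) (h0 : (ω 0).1 = (ω 0).2) (t : ℕ) :
    ((t : ℕ∞) ≤ nthTieTime 2 ω) ↔ ∀ s, 0 < s → s < t → (ω s).1 ≠ (ω s).2 := by
  constructor
  · intro H s hs0 hst htie
    have hex : ∃ u, 0 < u ∧ (ω u).1 = (ω u).2 := ⟨s, hs0, htie⟩
    classical
    have hu := Nat.find_spec hex
    set u := Nat.find hex with hu_def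
    have hus : u ≤ s := Nat.find_min' hex ⟨hs0, htie⟩
    have hnum : numTiesUpTo ω u = 2 := by
      unfold numTiesUpTo
      have hfe : (Finset.range (u+1)).filter (fun j => (ω j).1 = (ω j).2) = {0, u} := by
        ext j
        simp only [Finset.mem_filter, Finset.mem_range, Finset.mem_insert, Finset.mem_singleton]
        constructor
        · rintro ⟨hj, htj⟩
          by_contra hc
          push_neg at hc
          have hjlt : j < u := by omega
          exact Nat.find_min hex hjlt ⟨by omega, htj⟩
        · rintro (rfl | rfl)
          · exact ⟨by omega, h0⟩
          · exact ⟨by omega, hu.2⟩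
      rw [hfe]
      rw [Finset.card_insert_of_notMem (by
        simp only [Finset.mem_singleton]
        omega)]
      rw [Finset.card_singleton]
    have hmem : (u : ℕ∞) ∈ {t : ℕ∞ | ∃ s : ℕ, t = (s : ℕ∞) ∧ (ω s).1 = (ω s).2 ∧ numTiesUpTo ω s = 2} :=
      ⟨u, rfl, hu.2, hnum⟩
    have h1 : nthTieTime 2 ω ≤ (u : ℕ∞) := sInf_le hmem
    have h2 : (t : ℕ∞) ≤ (u : ℕ∞) := le_trans H h1
    have h3 : t ≤ u := by exact_mod_cast h2
    omega
  · intro H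
    apply le_sInf
    rintro x ⟨s, rfl, hts, hnum⟩
    by_contra hc
    have hst : (s : ℕ∞) < (t : ℕ∞) := not_le.1 hc
    have hst' : s < t := by exact_mod_cast hst
    rcases Nat.eq_zero_or_pos s with rfl | hs0
    · rw [numTies_zero ω h0] at hnum
      omega
    · exact H s hs0 hst' hts

lemma tieTime_lt_top_iff (ω : ℕ → ℕ × ℕ) (h0 : (ω 0).1 = (ω 0).2) :
    (nthTieTime 2 ω < ⊤) ↔ ∃ s, 0 < s ∧ (ω s).1 = (ω s).2 := by
  constructor
  · intro H
    by_contra hc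
    push_neg at hc
    have hall : ∀ t : ℕ, (t : ℕ∞) ≤ nthTieTime 2 ω := by
      intro t
      rw [tieTime_iff ω h0 t]
      intro s hs0 _ htie
      exact (hc s hs0) htie
    obtain ⟨n, hn⟩ : ∃ n : ℕ, nthTieTime 2 ω = (n : ℕ∞) := by
      exact ⟨(nthTieTime 2 ω).toNat, (ENat.coe_toNat (ne_of_lt H)).symm⟩
    have := hall (n+1)
    rw [hn] at this
    have : n + 1 ≤ n := by exact_mod_cast this
    omega
  · rintro ⟨s, hs0, htie⟩
    have : ¬ ((s+1 : ℕ) : ℕ∞) ≤ nthTieTime 2 ω := by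
      rw [tieTime_iff ω h0 (s+1)]
      push_neg
      exact ⟨s, hs0, by omega, htie⟩
    have h1 : nthTieTime 2 ω < ((s+1 : ℕ) : ℕ∞) := not_le.1 this
    exact lt_of_lt_of_le h1 le_top

end tietime

end UrnAux


/-- For `β ≥ β' ≥ 0`, `r ≥ 1` and a tied initial state `(x₀,x₀)`, the time of the
second tie (first return to a tie) satisfies `T₂(β,r,(x₀,x₀)) ⪰ T₂(β',r,(x₀,x₀))`.
In particular, the probability of ever tying again satisfies
`P[T₂(β,r,(x₀,x₀)) < ∞] ≤ 2/(r+1)`. -/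
theorem stmt_3 (β β' r : ℝ) (hβ'0 : 0 ≤ β') (hββ' : β' ≤ β) (hr : 1 ≤ r)
    (x₀ : ℕ) (hx₀ : 0 < x₀)
    (μ μ' : Measure (ℕ → ℕ × ℕ))
    (hμ : IsUrnProcess μ β r (x₀, x₀)) (hμ' : IsUrnProcess μ' β' r (x₀, x₀)) :
    (∀ t : ℕ, μ' {ω | (t : ℕ∞) ≤ nthTieTime 2 ω} ≤ μ {ω | (t : ℕ∞) ≤ nthTieTime 2 ω}) ∧
    (μ {ω | nthTieTime 2 ω < ⊤}).toReal ≤ 2 / (r + 1) := by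

  classical
  haveI := hμ.1
  haveI := hμ'.1
  have hβ0 : 0 ≤ β := le_trans hβ'0 hββ'
  have key : ∀ (ν : Measure (ℕ → ℕ × ℕ)) (γ : ℝ), IsUrnProcess ν γ r (x₀, x₀) →
      ∀ t : ℕ, ν {ω | (t : ℕ∞) ≤ nthTieTime 2 ω}
        = ENNReal.ofReal (UrnAux.gfun γ r (t-1) (x₀, x₀)) := by
    intro ν γ hν t
    rw [UrnAux.measure_inter_start hν]
    have hset : {ω : ℕ → ℕ × ℕ | (t : ℕ∞) ≤ nthTieTime 2 ω} ∩ UrnAux.startSet x₀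
        = UrnAux.ntSet (t-1) ∩ UrnAux.startSet x₀ := by
      ext ω
      simp only [Set.mem_inter_iff, Set.mem_setOf_eq, UrnAux.startSet, UrnAux.ntSet]
      constructor
      · rintro ⟨h1, h2⟩
        refine ⟨fun s hs1 hs2 => ?_, h2⟩
        have h0 : (ω 0).1 = (ω 0).2 := by rw [h2]
        exact (UrnAux.tieTime_iff ω h0 t).1 h1 s hs1 (by omega)
      · rintro ⟨h1, h2⟩
        have h0 : (ω 0).1 = (ω 0).2 := by rw [h2]
        exact ⟨(UrnAux.tieTime_iff ω h0 t).2 (fun s hs0 hst => h1 s hs0 (by omega)), h2⟩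
    rw [hset, UrnAux.measure_nt_inter_start hr hx₀ hν (t-1)]
  constructor
  · intro t
    rw [key μ β hμ t, key μ' β' hμ' t]
    exact ENNReal.ofReal_le_ofReal (UrnAux.gfun_mono_tie hβ'0 hββ' hr x₀ hx₀ (t-1))
  · have hr1 : (0:ℝ) < r + 1 := by linarith
    have hbound : (0:ℝ) ≤ 2/(r+1) := by positivity
    refine ENNReal.toReal_le_of_le_ofReal hbound ?_
    rw [UrnAux.measure_inter_start hμ]
    have hset : {ω : ℕ → ℕ × ℕ | nthTieTime 2 ω < ⊤} ∩ UrnAux.startSet x₀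
        = ⋃ n : ℕ, ((UrnAux.ntSet n)ᶜ ∩ UrnAux.startSet x₀) := by
      ext ω
      simp only [Set.mem_inter_iff, Set.mem_setOf_eq, Set.mem_iUnion, Set.mem_compl_iff,
        UrnAux.startSet, UrnAux.ntSet]
      constructor
      · rintro ⟨h1, h2⟩
        have h0 : (ω 0).1 = (ω 0).2 := by rw [h2]
        obtain ⟨s, hs0, htie⟩ := (UrnAux.tieTime_lt_top_iff ω h0).1 h1
        exact ⟨s, fun hall => (hall s hs0 (le_refl s)) htie, h2⟩
      · rintro ⟨n, h1, h2⟩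
        have h0 : (ω 0).1 = (ω 0).2 := by rw [h2]
        refine ⟨(UrnAux.tieTime_lt_top_iff ω h0).2 ?_, h2⟩
        by_contra hc
        push_neg at hc
        exact h1 (fun s hs1 _ => hc s hs1)
    rw [hset]
    have hmono : Monotone (fun n => (UrnAux.ntSet n)ᶜ ∩ UrnAux.startSet x₀) := by
      intro a b hab
      apply Set.inter_subset_inter_left
      apply Set.compl_subset_compl.2
      intro ω hω s hs1 hs2
      exact hω s hs1 (le_trans hs2 hab)
    rw [hmono.directed_le.measure_iUnion]
    apply iSup_le
    intro n
    have hsub : UrnAux.ntSet n ∩ UrnAux.startSet x₀ ⊆ UrnAux.startSet x₀ :=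
      Set.inter_subset_right
    have hd : (UrnAux.ntSet n)ᶜ ∩ UrnAux.startSet x₀
        = UrnAux.startSet x₀ \ (UrnAux.ntSet n ∩ UrnAux.startSet x₀) := by
      ext ω
      simp only [Set.mem_inter_iff, Set.mem_compl_iff, Set.mem_diff]
      tauto
    rw [hd, measure_diff hsub
      ((UrnAux.measurable_nt n).inter (UrnAux.measurable_start x₀)).nullMeasurableSet
      (measure_ne_top μ _),
      UrnAux.measure_start hμ, UrnAux.measure_nt_inter_start hr hx₀ hμ n]
    have hg0 : 0 ≤ UrnAux.gfun β r n (x₀, x₀) := UrnAux.gfun_nonneg hr n _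
    have hgb := UrnAux.one_sub_gfun_le hβ0 hr x₀ hx₀ n
    calc (1 : ENNReal) - ENNReal.ofReal (UrnAux.gfun β r n (x₀, x₀))
        = ENNReal.ofReal 1 - ENNReal.ofReal (UrnAux.gfun β r n (x₀, x₀)) := by
          rw [ENNReal.ofReal_one]
      _ = ENNReal.ofReal (1 - UrnAux.gfun β r n (x₀, x₀)) := (ENNReal.ofReal_sub 1 hg0).symm
      _ ≤ ENNReal.ofReal (2/(r+1)) := ENNReal.ofReal_le_ofReal hgb
end
end
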